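/- arXiv:2311.12453 — 6 statements merged into one kernel-verified Lean document; each statement's English description precedes it below -/
import Mathlib

section
/- Let p ∈ (0,1), q = 1 − p, and let x > 1. Consider the function a ↦ a·x − ln( p e^a / (1 − q e^a) ) defined for a ∈ (−∞, −ln q). Its supremum over this interval equals (x−1)·ln((x−1)/(x q)) − ln(p x); the supremum is attained at a* = ln((x−1)/(x q)) (which satisfies a* < −ln q), and its value is nonnegative. -/
open MeasureTheory Real

/-- Legendre transform of the cumulant generating function of the
geometric distribution with parameter `p`, evaluated at `x > 1`. -/
theorem geometric_legendre_transform
    (p q : ℝ) (hp : p ∈ Set.Ioo (0:ℝ) 1) (hq : q = 1 - p)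
    (x : ℝ) (hx : 1 < x)
    (f : ℝ → ℝ)
    (hf : ∀ a, f a = a * x - Real.log (p * Real.exp a / (1 - q * Real.exp a)))
    (astar : ℝ) (hastar : astar = Real.log ((x - 1) / (x * q))) :
    astar < -Real.log q ∧
    IsGreatest (f '' Set.Iio (-Real.log q))
      ((x - 1) * Real.log ((x - 1) / (x * q)) - Real.log (p * x)) ∧
    f astar = (x - 1) * Real.log ((x - 1) / (x * q)) - Real.log (p * x) ∧
    0 ≤ (x - 1) * Real.log ((x - 1) / (x * q)) - Real.log (p * x) := by
  obtain ⟨hp0, hp1⟩ := hp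
  have hq0 : 0 < q := by rw [hq]; linarith
  have hq1 : q < 1 := by rw [hq]; linarith
  have hx0 : 0 < x := by linarith
  have hx1 : 0 < x - 1 := by linarith
  have hxq : 0 < x * q := by positivity
  have hr : 0 < (x - 1) / (x * q) := by positivity
  have hea : Real.exp astar = (x - 1) / (x * q) := by
    rw [hastar, Real.exp_log hr]
  have hkey : 1 - q * Real.exp astar = 1 / x := by
    rw [hea]; field_simp; ring
  -- positivity of 1 - q e^a on the interval
  have hpos : ∀ a : ℝ, a < -Real.log q → 0 < 1 - q * Real.exp a := by
    intro a ha
    have h1 : Real.exp a < Real.exp (-Real.log q) := Real.exp_lt_exp.mpr ha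
    rw [Real.exp_neg, Real.exp_log hq0] at h1
    have h2 : q * Real.exp a < q * q⁻¹ := by
      exact mul_lt_mul_of_pos_left h1 hq0
    rw [mul_inv_cancel₀ hq0.ne'] at h2
    linarith
  -- rewrite f on the interval
  have hfa : ∀ a : ℝ, a < -Real.log q →
      f a = a * (x - 1) - Real.log p + Real.log (1 - q * Real.exp a) := by
    intro a ha
    rw [hf a, Real.log_div (by positivity) (hpos a ha).ne',
      Real.log_mul hp0.ne' (Real.exp_ne_zero a), Real.log_exp]
    ring
  -- astar < -log q
  have hlt : astar < -Real.log q := by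
    rw [hastar, ← Real.log_inv]
    apply Real.log_lt_log hr
    rw [div_lt_iff₀ hxq]
    have hxx : q⁻¹ * (x * q) = x := by field_simp
    rw [hxx]; linarith
  -- value at astar
  have hfstar : f astar = (x - 1) * Real.log ((x - 1) / (x * q)) - Real.log (p * x) := by
    rw [hfa astar hlt, hkey, ← hastar, one_div, Real.log_inv,
      Real.log_mul hp0.ne' hx0.ne']
    ring
  -- upper bound
  have hub : ∀ a : ℝ, a < -Real.log q →
      f a ≤ (x - 1) * Real.log ((x - 1) / (x * q)) - Real.log (p * x) := by
    intro a ha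
    have hpa := hpos a ha
    have hE := Real.exp_pos a
    have h1 : a - astar + 1 ≤ Real.exp (a - astar) := Real.add_one_le_exp _
    have hes : Real.exp (a - astar) * (x - 1) = Real.exp a * (x * q) := by
      rw [Real.exp_sub, hea]; field_simp
    have h1' : (a - astar) * (x - 1) ≤ Real.exp a * (x * q) - (x - 1) := by
      nlinarith [mul_le_mul_of_nonneg_right h1 hx1.le]
    have h2 : Real.log (x * (1 - q * Real.exp a)) ≤ x * (1 - q * Real.exp a) - 1 :=
      Real.log_le_sub_one_of_pos (by positivity)
    rw [Real.log_mul hx0.ne' hpa.ne'] at h2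
    rw [hfa a ha, ← hastar, Real.log_mul hp0.ne' hx0.ne']
    nlinarith
  -- nonnegativity via f 0 = 0
  have h0mem : (0:ℝ) < -Real.log q := by
    have := Real.log_neg hq0 hq1; linarith
  have hf0 : f 0 = 0 := by
    rw [hf 0, Real.exp_zero]
    have : 1 - q * 1 = p := by rw [hq]; ring
    rw [this, mul_one, div_self hp0.ne', Real.log_one]
    ring
  have hnn : 0 ≤ (x - 1) * Real.log ((x - 1) / (x * q)) - Real.log (p * x) := by
    have := hub 0 h0mem
    rw [hf0] at this; exact this
  refine ⟨hlt, ⟨⟨astar, hlt, hfstar⟩, ?_⟩, hfstar, hnn⟩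
  rintro y ⟨a, ha, rfl⟩
  exact hub a ha
end

section
/- For θ ∈ (0,2) set p_θ = e^{−θ}, q_θ = 1 − e^{−θ}, x_θ = 1/(1 − θ/2), and F(θ) = (x_θ − 1)·ln((x_θ − 1)/(x_θ q_θ)) − ln(p_θ x_θ). Then F(θ) = ((1 − ln 2)/2)·θ + o(θ) as θ → 0⁺; that is, (F(θ) − ((1 − ln 2)/2)θ)/θ tends to 0 as θ tends to 0 from the right. -/
open MeasureTheory Real Filter

private lemma lim_ratio :
    Tendsto (fun θ : ℝ => θ / (1 - Real.exp (-θ))) (nhdsWithin 0 (Set.Ioi 0)) (nhds 1) := by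
  have hd : HasDerivAt (fun θ : ℝ => 1 - Real.exp (-θ)) 1 0 := by
    have h1 : HasDerivAt (fun θ : ℝ => Real.exp (-θ)) (-1) 0 := by
      have := (Real.hasDerivAt_exp (-0)).comp 0 (hasDerivAt_neg 0)
      simpa [Function.comp_def] using this
    simpa using h1.const_sub 1
  have hslope := hasDerivAt_iff_tendsto_slope.mp hd
  have hslope' : Tendsto (fun θ : ℝ => (1 - Real.exp (-θ)) / θ)
      (nhdsWithin 0 (Set.Ioi 0)) (nhds 1) := by
    have hle : nhdsWithin (0:ℝ) (Set.Ioi 0) ≤ nhdsWithin 0 {(0:ℝ)}ᶜ :=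
      nhdsWithin_mono _ (fun x hx => ne_of_gt hx)
    have := hslope.mono_left hle
    refine this.congr (fun θ => ?_)
    simp [slope, Real.exp_zero, inv_mul_eq_div]
  have hinv := hslope'.inv₀ one_ne_zero
  simp only [inv_one] at hinv
  refine hinv.congr (fun θ => ?_)
  rw [inv_div]

private lemma lim_log_ratio :
    Tendsto (fun θ : ℝ => Real.log (θ / (1 - Real.exp (-θ))))
      (nhdsWithin 0 (Set.Ioi 0)) (nhds 0) := by
  have := (Real.continuousAt_log one_ne_zero).tendsto.comp lim_ratio
  simpa [Function.comp_def] using this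

private lemma lim_log_half :
    Tendsto (fun θ : ℝ => Real.log (1 - θ/2) / θ) (nhdsWithin 0 (Set.Ioi 0))
      (nhds (-(1/2))) := by
  have hd : HasDerivAt (fun θ : ℝ => Real.log (1 - θ/2)) (-(1/2)) 0 := by
    have h1 : HasDerivAt (fun θ : ℝ => 1 - θ/2) (-(1/2)) 0 := by
      simpa using ((hasDerivAt_id (0:ℝ)).div_const 2).const_sub 1
    have := h1.log (by norm_num)
    simpa using this
  have hslope := hasDerivAt_iff_tendsto_slope.mp hd
  have hle : nhdsWithin (0:ℝ) (Set.Ioi 0) ≤ nhdsWithin 0 {(0:ℝ)}ᶜ :=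
    nhdsWithin_mono _ (fun x hx => ne_of_gt hx)
  refine (hslope.mono_left hle).congr (fun θ => ?_)
  simp [slope, inv_mul_eq_div]

/-- first-order expansion of `θ ↦ Λ*_{e^{-θ}}(1/(1-θ/2))` at `0⁺`. -/
theorem legendre_geometric_expansion
    (F : ℝ → ℝ)
    (hF : ∀ θ ∈ Set.Ioo (0:ℝ) 2,
      F θ = (1/(1 - θ/2) - 1) *
          Real.log ((1/(1 - θ/2) - 1) / ((1/(1 - θ/2)) * (1 - Real.exp (-θ))))
        - Real.log (Real.exp (-θ) * (1/(1 - θ/2)))) :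
    Tendsto (fun θ => (F θ - ((1 - Real.log 2)/2) * θ) / θ)
      (nhdsWithin 0 (Set.Ioi 0)) (nhds 0) := by
  set c : ℝ := (1 - Real.log 2)/2 with hc
  -- target function
  set g : ℝ → ℝ := fun θ =>
    (Real.log (θ / (1 - Real.exp (-θ))) - Real.log 2) / (2 - θ)
      + 1 + Real.log (1 - θ/2) / θ - c with hg
  have hmem : Set.Ioo (0:ℝ) 2 ∈ nhdsWithin (0:ℝ) (Set.Ioi 0) :=
    Ioo_mem_nhdsGT_of_mem (by constructor <;> norm_num)
  have heq : (fun θ => (F θ - c * θ) / θ) =ᶠ[nhdsWithin (0:ℝ) (Set.Ioi 0)] g := by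
    filter_upwards [hmem] with θ hθ
    obtain ⟨hθ0, hθ2⟩ := hθ
    have h2θ : (2:ℝ) - θ ≠ 0 := by linarith
    have hhalf : (1:ℝ) - θ/2 > 0 := by linarith
    have hq : (0:ℝ) < 1 - Real.exp (-θ) := by
      have : Real.exp (-θ) < 1 := Real.exp_lt_one_iff.mpr (by linarith)
      linarith
    have hx1 : 1/(1 - θ/2) - 1 = θ / (2 - θ) := by
      rw [div_sub' (ne_of_gt hhalf), eq_div_iff h2θ]
      field_simp
      ring
    have harg : (1/(1 - θ/2) - 1) / ((1/(1 - θ/2)) * (1 - Real.exp (-θ)))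
        = (θ / (1 - Real.exp (-θ))) / 2 := by
      have h1θ : (1:ℝ)/(1 - θ/2) = 2/(2 - θ) := by
        rw [div_eq_div_iff (ne_of_gt hhalf) h2θ]; ring
      rw [hx1, h1θ]
      rw [div_eq_div_iff (by positivity) (by positivity)]
      field_simp
    have hlog1 : Real.log ((1/(1 - θ/2) - 1) / ((1/(1 - θ/2)) * (1 - Real.exp (-θ))))
        = Real.log (θ / (1 - Real.exp (-θ))) - Real.log 2 := by
      rw [harg, Real.log_div (by positivity) two_ne_zero]
    have hlog2 : Real.log (Real.exp (-θ) * (1/(1 - θ/2)))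
        = -θ - Real.log (1 - θ/2) := by
      rw [Real.log_mul (Real.exp_ne_zero _) (by positivity), Real.log_exp,
        one_div, Real.log_inv]
      ring
    have hFθ : F θ = (θ / (2 - θ)) * (Real.log (θ / (1 - Real.exp (-θ))) - Real.log 2)
        + θ + Real.log (1 - θ/2) := by
      rw [hF θ ⟨hθ0, hθ2⟩, hlog1, hlog2, hx1]; ring
    rw [hFθ, hg]
    field_simp
  refine Tendsto.congr' heq.symm ?_
  have h3 : Tendsto (fun θ : ℝ => (2:ℝ) - θ) (nhdsWithin 0 (Set.Ioi 0)) (nhds 2) := by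
    have h := Continuous.tendsto (by continuity : Continuous (fun θ : ℝ => (2:ℝ) - θ)) 0
    simpa using h.mono_left nhdsWithin_le_nhds
  have h1 : Tendsto (fun θ : ℝ =>
      (Real.log (θ / (1 - Real.exp (-θ))) - Real.log 2) / (2 - θ))
      (nhdsWithin 0 (Set.Ioi 0)) (nhds ((0 - Real.log 2)/2)) :=
    ((lim_log_ratio.sub tendsto_const_nhds).div h3 two_ne_zero)
  have htot := ((h1.add (tendsto_const_nhds (x := (1:ℝ)))).add lim_log_half).sub
    (tendsto_const_nhds (x := c))
  rw [hg]
  convert htot using 2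
  rw [hc]; ring
end

section
/- Let p ∈ (0,1), let G_1, …, G_n (n ≥ 1) be independent identically distributed random variables with the geometric distribution on {1,2,…} with parameter p, and let x ∈ (1, 1/p). Then P( ∑_{k=1}^n G_k < n·x ) ≤ exp( −n·Λ*_p(x) ), where Λ*_p(x) = (x−1)·ln((x−1)/(x(1−p))) − ln(p x). -/
open MeasureTheory ProbabilityTheory Real

/-- Cramér-type lower-deviation bound for i.i.d. geometric random
variables. -/
theorem geometric_cramer_bound
    {Ω : Type*} [MeasurableSpace Ω] (μ : Measure Ω) [IsProbabilityMeasure μ]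
    (p : ℝ) (hp : p ∈ Set.Ioo (0:ℝ) 1)
    (n : ℕ) (hn : 1 ≤ n)
    (G : Fin n → Ω → ℕ) (hGmeas : ∀ i, Measurable (G i))
    (hindep : iIndepFun G μ)
    (hlaw : ∀ i, ∀ k : ℕ, 1 ≤ k →
      μ {ω | G i ω = k} = ENNReal.ofReal (p * (1 - p) ^ (k - 1)))
    (x : ℝ) (hx : x ∈ Set.Ioo 1 (1/p)) :
    μ {ω | (∑ i, (G i ω : ℝ)) < n * x}
      ≤ ENNReal.ofReal (Real.exp (-(n : ℝ) *
          ((x - 1) * Real.log ((x - 1) / (x * (1 - p))) - Real.log (p * x)))) := by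
  obtain ⟨hp0, hp1⟩ := hp
  obtain ⟨hx1, hx2⟩ := hx
  have hx0 : 0 < x := by linarith
  have hpx : p * x < 1 := by
    have := (lt_div_iff₀ hp0).mp hx2
    nlinarith
  have h1p : 0 < 1 - p := by linarith
  set r : ℝ := (x - 1) / (x * (1 - p)) with hr_def
  have hr0 : 0 < r := div_pos (by linarith) (by positivity)
  have hr1 : r < 1 := by
    rw [hr_def, div_lt_one (by positivity)]
    nlinarith
  have hkey : (1 - p) * r = (x - 1) / x := by
    rw [hr_def]; field_simp
  have hkey' : 1 - (1 - p) * r = 1 / x := by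
    rw [hkey]; field_simp; ring
  have hq0 : 0 ≤ (1 - p) * r := by positivity
  have hq1 : (1 - p) * r < 1 := by
    rw [hkey, div_lt_one hx0]; linarith
  set t : ℝ := Real.log r with ht_def
  have hexpt : Real.exp t = r := Real.exp_log hr0
  have ht : t ≤ 0 := Real.log_nonpos hr0.le hr1.le
  -- the geometric weights sum to 1
  have hsum_geo : Summable (fun k : ℕ => p * (1 - p) ^ k) :=
    (summable_geometric_of_lt_one (by linarith) (by linarith)).mul_left p
  have htsum_geo : ∑' k : ℕ, p * (1 - p) ^ k = 1 := by
    rw [tsum_mul_left, tsum_geometric_of_lt_one (by linarith) (by linarith)]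
    rw [sub_sub_cancel, mul_inv_cancel₀ hp0.ne']
  -- zero mass at 0
  have hzero : ∀ i, μ {ω | G i ω = 0} = 0 := by
    intro i
    have hdisj : Pairwise (Function.onFun Disjoint fun k : ℕ => {ω | G i ω = k + 1}) := by
      intro a b hab
      simp only [Function.onFun, Set.disjoint_left, Set.mem_setOf_eq]
      intro ω ha hb
      exact hab (by omega)
    have hmeas : ∀ k : ℕ, MeasurableSet {ω | G i ω = k + 1} := fun k =>
      (hGmeas i) (measurableSet_singleton (k + 1))
    have hU : μ (⋃ k : ℕ, {ω | G i ω = k + 1}) = 1 := by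
      rw [measure_iUnion hdisj hmeas]
      have : ∀ k : ℕ, μ {ω | G i ω = k + 1} = ENNReal.ofReal (p * (1 - p) ^ k) := by
        intro k
        rw [hlaw i (k + 1) (by omega)]
        simp
      simp_rw [this]
      rw [← ENNReal.ofReal_tsum_of_nonneg (fun k => by positivity) hsum_geo, htsum_geo,
        ENNReal.ofReal_one]
    have hcompl : {ω | G i ω = 0} = (⋃ k : ℕ, {ω | G i ω = k + 1})ᶜ := by
      ext ω
      simp only [Set.mem_setOf_eq, Set.mem_compl_iff, Set.mem_iUnion]
      constructor
      · intro h ⟨k, hk⟩; omega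
      · intro h
        by_contra h0
        exact h ⟨G i ω - 1, by omega⟩
    rw [hcompl, measure_compl (MeasurableSet.iUnion hmeas) (measure_ne_top μ _), hU,
      measure_univ, tsub_self]
  -- mgf of each variable
  have hmgf : ∀ i, mgf (fun ω => (G i ω : ℝ)) μ t = p * r * x := by
    intro i
    have hfun : (fun ω => Real.exp (t * (G i ω : ℝ))) = fun ω => r ^ (G i ω) := by
      funext ω
      rw [mul_comm, Real.exp_nat_mul, hexpt]
    rw [mgf, hfun]
    set ν : Measure ℕ := μ.map (G i) with hν_def
    have hν : ∀ k : ℕ, ν {k} = μ {ω | G i ω = k} := by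
      intro k
      rw [hν_def, Measure.map_apply (hGmeas i) (measurableSet_singleton k)]
      rfl
    have hνprob : IsProbabilityMeasure ν := Measure.isProbabilityMeasure_map (hGmeas i).aemeasurable
    have hint : Integrable (fun k : ℕ => r ^ k) ν := by
      refine Integrable.mono' (integrable_const 1) ?_ ?_
      · exact Measurable.aestronglyMeasurable (measurable_from_nat)
      · refine ae_of_all _ fun k => ?_
        rw [Real.norm_eq_abs, abs_of_nonneg (by positivity)]
        exact pow_le_one₀ hr0.le hr1.le
    have hmap : ∫ ω, r ^ (G i ω) ∂μ = ∫ k, r ^ k ∂ν := by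
      rw [hν_def, integral_map (hGmeas i).aemeasurable
        (Measurable.aestronglyMeasurable measurable_from_nat)]
    rw [hmap, integral_countable' hint]
    have hc : ∀ k : ℕ, (ν {k}).toReal • r ^ k =
        (fun k : ℕ => (ν {k}).toReal * r ^ k) k := fun k => rfl
    have hsummable : Summable (fun k : ℕ => (ν {k}).toReal • r ^ k) := by
      refine Summable.of_nonneg_of_le (fun k => ?_) (fun k => ?_)
        (summable_geometric_of_lt_one hr0.le hr1)
      · simp only [smul_eq_mul]; positivity
      · simp only [smul_eq_mul]
        have h1 : (ν {k}).toReal ≤ 1 := by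
          have := prob_le_one (μ := ν) (s := {k})
          exact ENNReal.toReal_le_of_le_ofReal (by norm_num) (by simpa using this)
        nlinarith [pow_pos hr0 k, pow_nonneg hr0.le k]
    simp only [measureReal_def]
    rw [Summable.tsum_eq_zero_add hsummable]
    have h0 : (ν {0}).toReal • r ^ 0 = 0 := by
      rw [hν 0, hzero i]; simp
    rw [h0, zero_add]
    have hterm : ∀ k : ℕ, (ν {k + 1}).toReal • r ^ (k + 1) = (p * r) * ((1 - p) * r) ^ k := by
      intro k
      rw [hν (k + 1), hlaw i (k + 1) (by omega), smul_eq_mul,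
        ENNReal.toReal_ofReal (by positivity)]
      simp only [Nat.add_sub_cancel]
      rw [mul_pow, pow_succ]
      ring
    simp_rw [hterm]
    rw [tsum_mul_left, tsum_geometric_of_lt_one hq0 hq1, hkey']
    rw [one_div, inv_inv]
  -- real-valued variables
  set X : Fin n → Ω → ℝ := fun i ω => (G i ω : ℝ) with hX_def
  have hXmeas : ∀ i, Measurable (X i) := fun i => measurable_from_nat.comp (hGmeas i)
  have hXindep : iIndepFun X μ :=
    hindep.comp (fun _ (k : ℕ) => (k : ℝ)) (fun _ => measurable_from_nat)
  have hXint : ∀ i, Integrable (fun ω => Real.exp (t * X i ω)) μ := by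
    intro i
    refine Integrable.mono' (integrable_const 1) ?_ ?_
    · exact (((hXmeas i).const_mul t).exp).aestronglyMeasurable
    · refine ae_of_all _ fun ω => ?_
      rw [Real.norm_eq_abs, abs_of_nonneg (Real.exp_pos _).le, Real.exp_le_one_iff]
      exact mul_nonpos_of_nonpos_of_nonneg ht (Nat.cast_nonneg _)
  have hSint : Integrable (fun ω => Real.exp (t * (∑ i, X i) ω)) μ :=
    hindep.comp (fun _ (k : ℕ) => (k : ℝ)) (fun _ => measurable_from_nat)
      |>.integrable_exp_mul_sum hXmeas (fun i _ => hXint i)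
  have hchernoff := measure_le_le_exp_mul_mgf (μ := μ) (X := ∑ i, X i) (n * x) ht hSint
  have hmgfS : mgf (∑ i, X i) μ t = (p * r * x) ^ n := by
    rw [hXindep.mgf_sum hXmeas Finset.univ]
    rw [Finset.prod_congr rfl (fun i _ => (hmgf i : mgf (X i) μ t = p * r * x))]
    rw [Finset.prod_const, Finset.card_univ, Fintype.card_fin]
  have hprx : 0 < p * r * x := by positivity
  have hbound : Real.exp (-t * (n * x)) * mgf (∑ i, X i) μ t =
      Real.exp (-(n : ℝ) * ((x - 1) * Real.log r - Real.log (p * x))) := by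
    rw [hmgfS]
    have hlog : Real.log (p * r * x) = Real.log (p * x) + Real.log r := by
      rw [show p * r * x = (p * x) * r by ring, Real.log_mul (by positivity) hr0.ne']
    rw [show (p * r * x) ^ n = Real.exp ((n : ℝ) * Real.log (p * r * x)) by
      rw [Real.exp_nat_mul, Real.exp_log hprx], ← Real.exp_add]
    rw [hlog]
    congr 1
    ring
  -- combine
  have hevent : {ω | (∑ i, (G i ω : ℝ)) < n * x} ⊆ {ω | (∑ i, X i) ω ≤ n * x} := by
    intro ω hω
    simp only [Set.mem_setOf_eq, Finset.sum_apply] at *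
    exact hω.le
  calc μ {ω | (∑ i, (G i ω : ℝ)) < n * x}
      ≤ μ {ω | (∑ i, X i) ω ≤ n * x} := measure_mono hevent
    _ = ENNReal.ofReal ((μ {ω | (∑ i, X i) ω ≤ n * x}).toReal) :=
        (ENNReal.ofReal_toReal (measure_ne_top μ _)).symm
    _ ≤ ENNReal.ofReal (Real.exp (-(n : ℝ) *
          ((x - 1) * Real.log ((x - 1) / (x * (1 - p))) - Real.log (p * x)))) := by
        refine ENNReal.ofReal_le_ofReal ?_
        calc (μ {ω | (∑ i, X i) ω ≤ n * x}).toReal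
            ≤ Real.exp (-t * (n * x)) * mgf (∑ i, X i) μ t := hchernoff
          _ = Real.exp (-(n : ℝ) * ((x - 1) * Real.log r - Real.log (p * x))) := hbound
          _ = _ := by rw [hr_def]
end

section
/- Let t > 0, set c = −ln(1 − e^{−t}), and let M_1, …, M_n (n ≥ 1) be independent identically distributed random variables with the geometric distribution on {1,2,…} with parameter e^{−t}. Then for every natural number K ≥ 1, E[ (∑_{i=1}^n M_i + 1) · 1_{∃ i ≤ n : M_i > K} ] ≤ n e^{−cK} + n(K+2) e^{t} e^{−cK} + n(n−1) e^{t} e^{−cK}. -/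
open MeasureTheory ProbabilityTheory Real
open scoped ENNReal

set_option maxHeartbeats 2000000 in
/-- bound on `E[(∑ M_i + 1) · 1_{∃ i, M_i > K}]` for i.i.d. geometric
random variables with parameter `e^{-t}`. -/
theorem geometric_sum_indicator_bound
    {Ω : Type*} [MeasurableSpace Ω] (μ : Measure Ω) [IsProbabilityMeasure μ]
    (t : ℝ) (ht : 0 < t) (c : ℝ) (hc : c = -Real.log (1 - Real.exp (-t)))
    (n : ℕ) (hn : 1 ≤ n)
    (M : Fin n → Ω → ℕ) (hMmeas : ∀ i, Measurable (M i))
    (hindep : iIndepFun M μ)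
    (hlaw : ∀ i, ∀ k : ℕ, 1 ≤ k →
      μ {ω | M i ω = k}
        = ENNReal.ofReal (Real.exp (-t) * (1 - Real.exp (-t)) ^ (k - 1)))
    (K : ℕ) (hK : 1 ≤ K) :
    (∫ ω, ({ω | ∃ i, K < M i ω}).indicator
        (fun ω => (∑ i, (M i ω : ℝ)) + 1) ω ∂μ)
      ≤ (n : ℝ) * Real.exp (-(c * K))
        + (n : ℝ) * ((K : ℝ) + 2) * Real.exp t * Real.exp (-(c * K))
        + (n : ℝ) * ((n : ℝ) - 1) * Real.exp t * Real.exp (-(c * K)) := by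
  -- basic facts about `p = e^{-t}` and `q = 1 - p`
  set p := Real.exp (-t) with hp_def
  have hp : 0 < p := Real.exp_pos _
  have hp1 : p < 1 := by
    rw [hp_def, ← Real.exp_zero]; exact Real.exp_lt_exp.mpr (by linarith)
  set q := 1 - p with hq_def
  have hq0 : 0 < q := by simp [hq_def]; linarith
  have hq1 : q < 1 := by simp [hq_def]; linarith
  have hnorm : ‖q‖ < 1 := by rw [Real.norm_eq_abs, abs_of_pos hq0]; exact hq1
  have hpinv : p⁻¹ = Real.exp t := by rw [hp_def, Real.exp_neg, inv_inv]
  have he1 : (1:ℝ) ≤ Real.exp t := Real.one_le_exp ht.le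
  have hsum_geo : Summable (fun k : ℕ => q ^ k) := summable_geometric_of_lt_one hq0.le hq1
  have hsum_mul : Summable (fun k : ℕ => (k:ℝ) * q ^ k) :=
    (hasSum_coe_mul_geometric_of_norm_lt_one hnorm).summable
  have h1q : 1 - q = p := by rw [hq_def]; ring
  have hS1 : ∑' k : ℕ, q ^ k = p⁻¹ := by
    rw [tsum_geometric_of_lt_one hq0.le hq1, h1q]
  have hS2 : ∑' k : ℕ, (k:ℝ) * q ^ k = q / p ^ 2 := by
    rw [tsum_coe_mul_geometric_of_norm_lt_one hnorm, h1q]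
  have hsum_mean : Summable (fun k : ℕ => ((k:ℝ) + 1) * (p * q ^ k)) := by
    refine Summable.congr ((hsum_mul.mul_left p).add (hsum_geo.mul_left p)) (fun k => by ring)
  have hMean : ∑' k : ℕ, ((k:ℝ) + 1) * (p * q ^ k) = Real.exp t := by
    calc ∑' k : ℕ, ((k:ℝ) + 1) * (p * q ^ k)
        = ∑' k : ℕ, (p * ((k:ℝ) * q ^ k) + p * q ^ k) := by
          congr 1; funext k; ring
      _ = p * (q / p ^ 2) + p * p⁻¹ := by
          rw [Summable.tsum_add (hsum_mul.mul_left p) (hsum_geo.mul_left p),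
            tsum_mul_left, tsum_mul_left, hS1, hS2]
      _ = Real.exp t := by
          rw [← hpinv]; field_simp; rw [hq_def]; ring
  -- tail sums
  have htail_shift : ∀ k : ℕ, K ≤ k + K := fun k => Nat.le_add_left K k
  have hTailSummable : Summable (fun k : ℕ => if K ≤ k then p * q ^ k else 0) := by
    refine Summable.congr ((hsum_geo.mul_left p).indicator {k | K ≤ k}) (fun k => ?_)
    by_cases h : K ≤ k <;> simp [Set.indicator, h]
  have hTail : ∑' k : ℕ, (if K ≤ k then p * q ^ k else 0) = q ^ K := by
    rw [← Summable.sum_add_tsum_nat_add K hTailSummable]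
    rw [Finset.sum_eq_zero (fun i hi => by
      simp [Finset.mem_range] at hi; simp [Nat.not_le.mpr hi])]
    simp only [htail_shift, if_true, zero_add, pow_add]
    calc ∑' k : ℕ, p * (q ^ k * q ^ K) = ∑' k : ℕ, (p * q ^ K) * q ^ k := by
          congr 1; funext k; ring
      _ = (p * q ^ K) * p⁻¹ := by rw [tsum_mul_left, hS1]
      _ = q ^ K := by field_simp
  have hTruncSummable : Summable (fun k : ℕ => if K ≤ k then ((k:ℝ) + 1) * (p * q ^ k) else 0) := by
    refine Summable.congr (hsum_mean.indicator {k | K ≤ k}) (fun k => ?_)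
    by_cases h : K ≤ k <;> simp [Set.indicator, h]
  have hTrunc : ∑' k : ℕ, (if K ≤ k then ((k:ℝ) + 1) * (p * q ^ k) else 0)
      ≤ q ^ K * (((K:ℝ) + 2) * Real.exp t) := by
    rw [← Summable.sum_add_tsum_nat_add K hTruncSummable]
    rw [Finset.sum_eq_zero (fun i hi => by
      simp [Finset.mem_range] at hi; simp [Nat.not_le.mpr hi])]
    simp only [htail_shift, if_true, zero_add]
    have hsummul' : Summable (fun k : ℕ => ((k:ℝ) + ((K:ℝ)+1)) * q ^ k) := by
      refine Summable.congr (hsum_mul.add (hsum_geo.mul_left ((K:ℝ)+1))) (fun k => by ring)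
    have hval : ∑' k : ℕ, ((k:ℝ) + ((K:ℝ)+1)) * q ^ k = q / p ^ 2 + ((K:ℝ)+1) * p⁻¹ := by
      calc ∑' k : ℕ, ((k:ℝ) + ((K:ℝ)+1)) * q ^ k
          = ∑' k : ℕ, ((k:ℝ) * q ^ k + ((K:ℝ)+1) * q ^ k) := by congr 1; funext k; ring
        _ = q / p ^ 2 + ((K:ℝ)+1) * p⁻¹ := by
            rw [Summable.tsum_add hsum_mul (hsum_geo.mul_left _), tsum_mul_left, hS1, hS2]
    calc ∑' k : ℕ, ((↑(k + K):ℝ) + 1) * (p * q ^ (k + K))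
        = ∑' k : ℕ, (p * q ^ K) * (((k:ℝ) + ((K:ℝ)+1)) * q ^ k) := by
          congr 1; funext k; push_cast; rw [pow_add]; ring
      _ = (p * q ^ K) * (q / p ^ 2 + ((K:ℝ)+1) * p⁻¹) := by rw [tsum_mul_left, hval]
      _ ≤ q ^ K * (((K:ℝ) + 2) * Real.exp t) := by
          rw [← hpinv]
          have hqK : (0:ℝ) < q ^ K := pow_pos hq0 K
          have h2 : p * (q / p ^ 2 + ((K:ℝ)+1) * p⁻¹) = q / p + ((K:ℝ)+1) := by
            field_simp
          have h3 : q / p ≤ p⁻¹ := by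
            rw [div_eq_mul_inv]
            nlinarith [inv_pos.mpr hp]
          have h4 : ((K:ℝ)+1) ≤ ((K:ℝ)+1) * p⁻¹ := by
            nlinarith [inv_pos.mpr hp, hpinv, he1, Nat.cast_nonneg (α := ℝ) K]
          calc p * q ^ K * (q / p ^ 2 + ((K:ℝ)+1) * p⁻¹)
              = q ^ K * (q / p + ((K:ℝ)+1)) := by rw [mul_comm p (q^K), mul_assoc, h2]
            _ ≤ q ^ K * (((K:ℝ) + 2) * p⁻¹) := by
                have : q / p + ((K:ℝ)+1) ≤ ((K:ℝ) + 2) * p⁻¹ := by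
                  have := inv_pos.mpr hp
                  nlinarith [h3, h4, hpinv, he1]
                nlinarith [hqK]
  -- key identity : lintegral of a function of `M i` as a weighted sum
  have key : ∀ (g : ℕ → ℝ≥0∞), g 0 = 0 → ∀ i, ∫⁻ ω, g (M i ω) ∂μ
      = ∑' k : ℕ, g (k + 1) * ENNReal.ofReal (p * q ^ k) := by
    intro g hg0 i
    rw [← lintegral_map measurable_from_nat (hMmeas i), lintegral_countable']
    have hsing : ∀ k : ℕ, (μ.map (M i)) {k} = μ {ω | M i ω = k} := by
      intro k
      rw [Measure.map_apply (hMmeas i) (measurableSet_singleton k)]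
      rfl
    rw [tsum_eq_zero_add' ENNReal.summable]
    simp only [hsing, hg0, zero_mul, zero_add]
    congr 1; funext k
    rw [hlaw i (k+1) (Nat.le_add_left 1 k)]
    simp
  have hpq : ∀ k : ℕ, 0 ≤ p * q ^ k := fun k => by positivity
  have hcast : ∀ (k : ℕ) (x : ℝ), 0 ≤ x →
      ((k + 1 : ℕ) : ℝ≥0∞) * ENNReal.ofReal x = ENNReal.ofReal (((k:ℝ) + 1) * x) := by
    intro k x hx
    rw [← ENNReal.ofReal_natCast (k+1), ← ENNReal.ofReal_mul (by positivity)]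
    congr 1
    push_cast
    ring
  -- tail probability
  have hE1 : ∀ i, ∫⁻ ω, (if K < M i ω then (1:ℝ≥0∞) else 0) ∂μ = ENNReal.ofReal (q ^ K) := by
    intro i
    rw [key (fun k => if K < k then (1:ℝ≥0∞) else 0) (by simp [Nat.not_lt_zero]) i]
    calc ∑' k : ℕ, (if K < k + 1 then (1:ℝ≥0∞) else 0) * ENNReal.ofReal (p * q ^ k)
        = ∑' k : ℕ, ENNReal.ofReal (if K ≤ k then p * q ^ k else 0) := by
          refine tsum_congr (fun k => ?_)
          by_cases h : K ≤ k <;> simp [Nat.lt_add_one_iff, h]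
      _ = ENNReal.ofReal (∑' k : ℕ, (if K ≤ k then p * q ^ k else 0)) :=
          (ENNReal.ofReal_tsum_of_nonneg (fun k => by positivity) hTailSummable).symm
      _ = ENNReal.ofReal (q ^ K) := by rw [hTail]
  -- mean
  have hE2 : ∀ j, ∫⁻ ω, (M j ω : ℝ≥0∞) ∂μ = ENNReal.ofReal (Real.exp t) := by
    intro j
    rw [key (fun k => (k : ℝ≥0∞)) (by simp) j]
    calc ∑' k : ℕ, ((k + 1 : ℕ) : ℝ≥0∞) * ENNReal.ofReal (p * q ^ k)
        = ∑' k : ℕ, ENNReal.ofReal (((k:ℝ) + 1) * (p * q ^ k)) := by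
          exact tsum_congr (fun k => hcast k _ (hpq k))
      _ = ENNReal.ofReal (∑' k : ℕ, ((k:ℝ) + 1) * (p * q ^ k)) :=
          (ENNReal.ofReal_tsum_of_nonneg (fun k => by positivity) hsum_mean).symm
      _ = ENNReal.ofReal (Real.exp t) := by rw [hMean]
  -- truncated mean
  have hE3 : ∀ i, ∫⁻ ω, (if K < M i ω then (M i ω : ℝ≥0∞) else 0) ∂μ
      ≤ ENNReal.ofReal (q ^ K * (((K:ℝ) + 2) * Real.exp t)) := by
    intro i
    rw [key (fun k => if K < k then (k : ℝ≥0∞) else 0) (by simp) i]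
    calc ∑' k : ℕ, (if K < k + 1 then ((k + 1 : ℕ) : ℝ≥0∞) else 0) * ENNReal.ofReal (p * q ^ k)
        = ∑' k : ℕ, ENNReal.ofReal (if K ≤ k then ((k:ℝ) + 1) * (p * q ^ k) else 0) := by
          refine tsum_congr (fun k => ?_)
          by_cases h : K ≤ k
          · simp only [Nat.lt_add_one_iff, h, if_true]
            exact hcast k _ (hpq k)
          · simp [Nat.lt_add_one_iff, h]
      _ = ENNReal.ofReal (∑' k : ℕ, (if K ≤ k then ((k:ℝ) + 1) * (p * q ^ k) else 0)) :=
          (ENNReal.ofReal_tsum_of_nonneg (fun k => by positivity) hTruncSummable).symm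
      _ ≤ ENNReal.ofReal (q ^ K * (((K:ℝ) + 2) * Real.exp t)) := ENNReal.ofReal_le_ofReal hTrunc
  -- cross terms via independence
  have hcross : ∀ i j, i ≠ j →
      ∫⁻ ω, (if K < M i ω then (1:ℝ≥0∞) else 0) * (M j ω : ℝ≥0∞) ∂μ
        = ENNReal.ofReal (q ^ K) * ENNReal.ofReal (Real.exp t) := by
    intro i j hij
    have hind : IndepFun ((fun k => if K < k then (1:ℝ≥0∞) else 0) ∘ M i)
        ((fun k : ℕ => (k : ℝ≥0∞)) ∘ M j) μ :=
      (hindep.indepFun hij).comp measurable_from_nat measurable_from_nat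
    have := lintegral_mul_eq_lintegral_mul_lintegral_of_indepFun''
      (μ := μ)
      (f := (fun k => if K < k then (1:ℝ≥0∞) else 0) ∘ M i)
      (g := (fun k : ℕ => (k : ℝ≥0∞)) ∘ M j)
      (measurable_from_nat.comp (hMmeas i)).aemeasurable
      (measurable_from_nat.comp (hMmeas j)).aemeasurable hind
    simp only [Function.comp_apply] at this
    rw [this, hE1 i, hE2 j]
  -- assembling everything
  have hqK : Real.exp (-(c * K)) = q ^ K := by
    have h1 : -(c * K) = (K : ℝ) * Real.log q := by rw [hc]; ring
    rw [h1, Real.exp_nat_mul, Real.exp_log hq0]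
  have hn1 : (1:ℝ) ≤ (n:ℝ) := by exact_mod_cast hn
  set A : Fin n → Set Ω := fun i => {ω | K < M i ω} with hA_def
  have hAmeas : ∀ i, MeasurableSet (A i) := fun i => hMmeas i MeasurableSet.of_discrete
  have hAU : {ω | ∃ i, K < M i ω} = ⋃ i, A i := by
    rw [hA_def]; exact Set.setOf_exists _
  set G : Ω → ℝ≥0∞ := fun ω => (∑ j, (M j ω : ℝ≥0∞)) + 1 with hG_def
  have hGmeas : Measurable G := by
    apply Measurable.add _ measurable_const
    exact Finset.measurable_sum _ (fun j _ => measurable_from_nat.comp (hMmeas j))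
  have hfmeas : Measurable (({ω | ∃ i, K < M i ω}).indicator
      (fun ω => (∑ i, (M i ω : ℝ)) + 1)) := by
    apply Measurable.indicator
    · exact Measurable.add (Finset.measurable_sum _
        (fun j _ => measurable_from_nat.comp (hMmeas j))) measurable_const
    · rw [hAU]; exact MeasurableSet.iUnion hAmeas
  have hfnonneg : 0 ≤ᵐ[μ] ({ω | ∃ i, K < M i ω}).indicator
      (fun ω => (∑ i, (M i ω : ℝ)) + 1) := by
    refine Filter.Eventually.of_forall (fun ω => Set.indicator_nonneg (fun ω _ => ?_) ω)
    positivity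
  rw [integral_eq_lintegral_of_nonneg_ae hfnonneg hfmeas.aestronglyMeasurable]
  have hpt : ∀ ω, ENNReal.ofReal (({ω | ∃ i, K < M i ω}).indicator
      (fun ω => (∑ i, (M i ω : ℝ)) + 1) ω) = (⋃ i, A i).indicator G ω := by
    intro ω
    rw [← hAU]
    by_cases h : ω ∈ {ω | ∃ i, K < M i ω}
    · rw [Set.indicator_of_mem h, Set.indicator_of_mem h, hG_def,
        ENNReal.ofReal_add (by positivity) zero_le_one, ENNReal.ofReal_one]
      congr 1
      rw [ENNReal.ofReal_sum_of_nonneg (fun j _ => by positivity)]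
      exact Finset.sum_congr rfl (fun j _ => ENNReal.ofReal_natCast _)
    · rw [Set.indicator_of_notMem h, Set.indicator_of_notMem h, ENNReal.ofReal_zero]
  rw [lintegral_congr hpt]
  -- union bound
  have hub : ∫⁻ ω, (⋃ i, A i).indicator G ω ∂μ ≤ ∑ i, ∫⁻ ω, (A i).indicator G ω ∂μ := by
    rw [← lintegral_finset_sum _ (fun i _ => hGmeas.indicator (hAmeas i))]
    refine lintegral_mono (fun ω => ?_)
    by_cases h : ω ∈ ⋃ i, A i
    · obtain ⟨i, hi⟩ := Set.mem_iUnion.mp h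
      rw [Set.indicator_of_mem h]
      calc G ω = (A i).indicator G ω := (Set.indicator_of_mem hi G).symm
        _ ≤ ∑ j, (A j).indicator G ω :=
            Finset.single_le_sum (f := fun j => (A j).indicator G ω)
              (fun j _ => zero_le) (Finset.mem_univ i)
    · simp [Set.indicator_of_notMem h]
  have hχmeas : ∀ i, Measurable (fun ω => if K < M i ω then (1:ℝ≥0∞) else 0) := fun i =>
    (measurable_from_nat (f := fun k : ℕ => if K < k then (1:ℝ≥0∞) else 0)).comp (hMmeas i)
  have hMcoe : ∀ j, Measurable (fun ω => (M j ω : ℝ≥0∞)) := fun j =>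
    (measurable_from_nat (f := fun k : ℕ => (k : ℝ≥0∞))).comp (hMmeas j)
  -- per-index bound
  set B : ℝ≥0∞ := ENNReal.ofReal (q ^ K * (((K:ℝ) + 2) * Real.exp t))
      + (n - 1 : ℕ) * (ENNReal.ofReal (q ^ K) * ENNReal.ofReal (Real.exp t))
      + ENNReal.ofReal (q ^ K) with hB_def
  have hper : ∀ i, ∫⁻ ω, (A i).indicator G ω ∂μ ≤ B := by
    intro i
    have hptA : ∀ ω, (A i).indicator G ω
        = (∑ j, (if K < M i ω then (1:ℝ≥0∞) else 0) * (M j ω : ℝ≥0∞))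
          + (if K < M i ω then (1:ℝ≥0∞) else 0) := by
      intro ω
      by_cases h : ω ∈ A i
      · have hlt : K < M i ω := h
        rw [Set.indicator_of_mem h, hG_def]
        simp [hlt]
      · have hlt : ¬ K < M i ω := h
        rw [Set.indicator_of_notMem h]
        simp [hlt]
    rw [lintegral_congr hptA]
    rw [lintegral_add_right _ (hχmeas i)]
    rw [lintegral_finset_sum _ (f := fun j ω => (if K < M i ω then (1:ℝ≥0∞) else 0) * (M j ω : ℝ≥0∞)) (fun j _ => ((hχmeas i).mul (hMcoe j)))]
    rw [hE1 i]
    rw [← Finset.add_sum_erase _ _ (Finset.mem_univ i)]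
    have hii : ∫⁻ ω, (if K < M i ω then (1:ℝ≥0∞) else 0) * (M i ω : ℝ≥0∞) ∂μ
        ≤ ENNReal.ofReal (q ^ K * (((K:ℝ) + 2) * Real.exp t)) := by
      refine le_trans (le_of_eq (lintegral_congr (fun ω => ?_))) (hE3 i)
      by_cases h : K < M i ω <;> simp [h]
    have hoff : ∑ j ∈ Finset.univ.erase i,
        ∫⁻ ω, (if K < M i ω then (1:ℝ≥0∞) else 0) * (M j ω : ℝ≥0∞) ∂μ
        = (n - 1 : ℕ) * (ENNReal.ofReal (q ^ K) * ENNReal.ofReal (Real.exp t)) := by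
      rw [Finset.sum_congr rfl (fun j hj => hcross i j (fun hij =>
        (Finset.mem_erase.mp hj).1 hij.symm))]
      rw [Finset.sum_const, Finset.card_erase_of_mem (Finset.mem_univ i), Finset.card_univ,
        Fintype.card_fin, nsmul_eq_mul]
    rw [hB_def, hoff]
    exact add_le_add (add_le_add hii le_rfl) le_rfl
  have htotal : ∫⁻ ω, (⋃ i, A i).indicator G ω ∂μ ≤ (n : ℝ≥0∞) * B := by
    refine hub.trans ?_
    calc ∑ i, ∫⁻ ω, (A i).indicator G ω ∂μ ≤ ∑ _i : Fin n, B :=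
          Finset.sum_le_sum (fun i _ => hper i)
      _ = (n : ℝ≥0∞) * B := by rw [Finset.sum_const, Finset.card_univ, Fintype.card_fin,
          nsmul_eq_mul]
  have hqKpos : (0:ℝ) < q ^ K := pow_pos hq0 K
  have hexp : (0:ℝ) < Real.exp t := Real.exp_pos t
  have hn1' : (0:ℝ) ≤ (n:ℝ) - 1 := by linarith
  have hRHSnonneg : (0:ℝ) ≤ (n : ℝ) * Real.exp (-(c * K))
        + (n : ℝ) * ((K : ℝ) + 2) * Real.exp t * Real.exp (-(c * K))
        + (n : ℝ) * ((n : ℝ) - 1) * Real.exp t * Real.exp (-(c * K)) := by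
    have h1 : (0:ℝ) ≤ (n : ℝ) * Real.exp (-(c * K)) := by positivity
    have h2 : (0:ℝ) ≤ (n : ℝ) * ((K : ℝ) + 2) * Real.exp t * Real.exp (-(c * K)) := by positivity
    have h3 : (0:ℝ) ≤ (n : ℝ) * ((n : ℝ) - 1) * Real.exp t * Real.exp (-(c * K)) := by
      have := Real.exp_pos (-(c * K))
      nlinarith
    linarith
  refine ENNReal.toReal_le_of_le_ofReal hRHSnonneg (htotal.trans ?_)
  have hcast1 : ((n - 1 : ℕ) : ℝ≥0∞) = ENNReal.ofReal ((n:ℝ) - 1) := by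
    rw [← ENNReal.ofReal_natCast]
    congr 1
    rw [Nat.cast_sub hn, Nat.cast_one]
  have hcastn : (n : ℝ≥0∞) = ENNReal.ofReal (n:ℝ) := (ENNReal.ofReal_natCast n).symm
  rw [hB_def, hcast1, hcastn,
    ← ENNReal.ofReal_mul hqKpos.le,
    ← ENNReal.ofReal_mul hn1',
    ← ENNReal.ofReal_add (by positivity) (mul_nonneg hn1' (by positivity)),
    ← ENNReal.ofReal_add (add_nonneg (by positivity) (mul_nonneg hn1' (by positivity)))
      hqKpos.le,
    ← ENNReal.ofReal_mul (by positivity)]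
  refine ENNReal.ofReal_le_ofReal (le_of_eq ?_)
  rw [hqK]
  ring
end

section
/- Let n ≥ 1, let M_1, …, M_n be natural numbers, let ε_1, …, ε_n ∈ {−1, +1}, and let χ_1, …, χ_n : ℝ → ℕ be nonincreasing right-continuous functions such that χ_i(r) ≤ M_i for all r ∈ ℝ and all i. Then the set of values { ∑_{i=1}^n ε_i χ_i(r) : r ∈ ℝ } ⊆ ℤ has cardinality at most ∑_{i=1}^n M_i + 1. -/
open Set

/-- a signed sum of `n` nonincreasing right-continuous `ℕ`-valued
functions bounded by `M_i` takes at most `∑ M_i + 1` values on `ℝ`. -/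
theorem signed_sum_of_antitone_counts_finite_range
    (n : ℕ) (hn : 1 ≤ n) (M : Fin n → ℕ) (ε : Fin n → ℤ)
    (hε : ∀ i, ε i = 1 ∨ ε i = -1)
    (χ : Fin n → ℝ → ℕ)
    (hanti : ∀ i, Antitone (χ i))
    (hrc : ∀ i r, ContinuousWithinAt (χ i) (Set.Ici r) r)
    (hbd : ∀ i r, χ i r ≤ M i) :
    (Set.range fun r : ℝ => ∑ i, ε i * (χ i r : ℤ)).Finite ∧
    (Set.range fun r : ℝ => ∑ i, ε i * (χ i r : ℤ)).ncard ≤ (∑ i, M i) + 1 := by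
  set F : ℝ → ℤ := fun r => ∑ i, ε i * (χ i r : ℤ) with hF
  set S : ℝ → ℕ := fun r => ∑ i, χ i r with hS
  -- key: S r = S s → F r = F s
  have key : ∀ r s : ℝ, S r = S s → F r = F s := by
    have key' : ∀ r s : ℝ, r ≤ s → S r = S s → F r = F s := by
      intro r s hrs hSS
      have hle : ∀ i ∈ Finset.univ, χ i s ≤ χ i r := fun i _ => hanti i hrs
      have := (Finset.sum_eq_sum_iff_of_le hle).1 hSS.symm
      simp only [hF]
      exact Finset.sum_congr rfl fun i hi => by rw [this i hi]
    intro r s h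
    rcases le_total r s with hrs | hrs
    · exact key' r s hrs h
    · exact (key' s r hrs h.symm).symm
  classical
  -- factor F through S
  set g : ℕ → ℤ := fun k => if h : ∃ r, S r = k then F h.choose else 0 with hg
  have hfac : ∀ r, F r = g (S r) := by
    intro r
    have h : ∃ r', S r' = S r := ⟨r, rfl⟩
    simp only [hg, dif_pos h]
    exact (key _ _ h.choose_spec).symm
  have hrange : Set.range F = g '' Set.range S := by
    ext v
    constructor
    · rintro ⟨r, rfl⟩; exact ⟨S r, ⟨r, rfl⟩, (hfac r).symm⟩
    · rintro ⟨k, ⟨r, rfl⟩, rfl⟩; exact ⟨r, hfac r⟩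
  have hSsub : Set.range S ⊆ Set.Iic (∑ i, M i) := by
    rintro k ⟨r, rfl⟩
    exact Finset.sum_le_sum fun i _ => hbd i r
  have hSfin : (Set.range S).Finite := (Set.finite_Iic _).subset hSsub
  have hScard : (Set.range S).ncard ≤ (∑ i, M i) + 1 := by
    have := Set.ncard_le_ncard hSsub (Set.finite_Iic _)
    calc (Set.range S).ncard ≤ (Set.Iic (∑ i, M i)).ncard := this
      _ = (∑ i, M i) + 1 := by
          rw [← Finset.coe_Iic, Set.ncard_coe_finset, Nat.card_Iic]
  constructor
  · rw [hrange]; exact hSfin.image g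
  · rw [hrange]
    exact le_trans (Set.ncard_image_le hSfin) hScard
end

section
/- In the setup below, let T > 0 with t ∈ [0,T] (and t > 0), set C(t) = 2e^{2t} − e^{t} and c₃ = −ln(1 − e^{−T}), and assume in addition that lim_{r→−∞} G(r) = 1. For each i let S_i = sup_{r∈ℝ} χ_i(·)(r) (which equals the limit of χ_i(·)(r) as r → −∞, and is at most M_i), and let N_tot = ∑_{i=1}^n S_i. Then for every η > 0, every α ∈ (0, 1/2) and every integer n ≥ max( 8C(t)/η², 2 ), one has P( |N_tot − n| > nη ) ≤ 16 n² exp( − n^{1−2α} η² / 32 ) + 32 e^{T} n² exp( − c₃ n^{α} ). -/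
open MeasureTheory ProbabilityTheory Real Filter
open scoped ENNReal NNReal
set_option maxHeartbeats 2000000

section helpers
variable {Ω : Type*} [MeasurableSpace Ω] {μ : Measure Ω}

lemma exp_le_quad {x : ℝ} (hx : |x| ≤ 1) : Real.exp x ≤ 1 + x + (3/4) * x ^ 2 := by
  have h := Real.exp_bound hx (n := 2) (by norm_num)
  have h2 : ∑ m ∈ Finset.range 2, x ^ m / m.factorial = 1 + x := by
    simp [Finset.sum_range_succ]
  rw [h2] at h
  have h3 := (abs_sub_le_iff.1 h).1
  have hx2 : |x| ^ 2 = x ^ 2 := sq_abs x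
  rw [hx2] at h3
  norm_num [Nat.factorial] at h3
  linarith

lemma lintegral_natCast_eq_tsum {f : Ω → ℕ} (hf : Measurable f) :
    ∫⁻ ω, (f ω : ℝ≥0∞) ∂μ = ∑' j : ℕ, μ {ω | j < f ω} := by
  have hms : ∀ j : ℕ, MeasurableSet {ω | j < f ω} := fun j =>
    hf ((Set.to_countable _).measurableSet (s := Set.Ioi j))
  have key : ∀ ω, (f ω : ℝ≥0∞)
      = ∑' j : ℕ, Set.indicator {ω | j < f ω} (fun _ => (1:ℝ≥0∞)) ω := by
    intro ω
    have h1 : ∀ j : ℕ, Set.indicator {ω | j < f ω} (fun _ => (1:ℝ≥0∞)) ω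
        = if j < f ω then (1:ℝ≥0∞) else 0 := fun j => by
      simp [Set.indicator_apply]
    rw [tsum_congr h1, tsum_eq_sum (s := Finset.range (f ω))
      (by intro j hj; simp only [Finset.mem_range, not_lt] at hj
          simp [Nat.not_lt.2 hj])]
    have h2 : ∀ j ∈ Finset.range (f ω), (if j < f ω then (1:ℝ≥0∞) else 0) = 1 := by
      intro j hj; simp only [Finset.mem_range] at hj; simp [hj]
    rw [Finset.sum_congr rfl h2, Finset.sum_const, Finset.card_range]
    simp
  calc ∫⁻ ω, (f ω : ℝ≥0∞) ∂μ
      = ∫⁻ ω, ∑' j : ℕ, Set.indicator {ω | j < f ω} (fun _ => (1:ℝ≥0∞)) ω ∂μ :=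
        lintegral_congr key
    _ = ∑' j : ℕ, ∫⁻ ω, Set.indicator {ω | j < f ω} (fun _ => (1:ℝ≥0∞)) ω ∂μ :=
        lintegral_tsum (fun j => ((measurable_one).indicator (hms j)).aemeasurable)
    _ = ∑' j : ℕ, μ {ω | j < f ω} := by
        refine tsum_congr fun j => ?_
        rw [lintegral_indicator (hms j)]
        simp

lemma integral_natCast_eq_toReal {f : Ω → ℕ} (hf : Measurable f) :
    ∫ ω, (f ω : ℝ) ∂μ = (∫⁻ ω, (f ω : ℝ≥0∞) ∂μ).toReal := by
  have hm : Measurable fun ω => (f ω : ℝ) := measurable_from_top.comp hf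
  rw [integral_eq_lintegral_of_nonneg_ae (ae_of_all _ fun ω => by positivity)
    hm.aestronglyMeasurable]
  congr 1
  refine lintegral_congr fun ω => ?_
  simp [ENNReal.ofReal_natCast]

lemma integrable_natCast_of_lintegral_ne_top {f : Ω → ℕ} (hf : Measurable f)
    (h : ∫⁻ ω, (f ω : ℝ≥0∞) ∂μ ≠ ⊤) : Integrable (fun ω => (f ω : ℝ)) μ := by
  have hm : Measurable fun ω => (f ω : ℝ) := measurable_from_top.comp hf
  refine ⟨hm.aestronglyMeasurable, ?_⟩
  rw [hasFiniteIntegral_iff_norm]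
  have heq : ∀ ω, ENNReal.ofReal ‖(f ω : ℝ)‖ = (f ω : ℝ≥0∞) := fun ω => by
    rw [Real.norm_natCast, ENNReal.ofReal_natCast]
  calc ∫⁻ ω, ENNReal.ofReal ‖(f ω : ℝ)‖ ∂μ = ∫⁻ ω, (f ω : ℝ≥0∞) ∂μ := lintegral_congr heq
    _ < ⊤ := h.lt_top

lemma nat_antitone_iSup {h : ℝ → ℕ} (hh : Antitone h) {B : ℕ} (hB : ∀ r, h r ≤ B) :
    ∃ k₀ : ℕ, (⨆ r : ℝ, h r) = h (-(k₀:ℝ)) ∧ ∀ r, h r ≤ h (-(k₀:ℝ)) := by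
  have hne : (Set.range fun k : ℕ => h (-(k:ℝ))).Nonempty := ⟨h 0, ⟨0, by norm_num⟩⟩
  have hbdd : BddAbove (Set.range fun k : ℕ => h (-(k:ℝ))) := ⟨B, by rintro x ⟨k, rfl⟩; exact hB _⟩
  obtain ⟨k₀, hk₀⟩ := Nat.sSup_mem hne hbdd
  have hmax : ∀ r, h r ≤ h (-(k₀:ℝ)) := by
    intro r
    have h1 : h r ≤ h (-(⌈-r⌉₊ : ℝ)) := hh (by
      have := Nat.le_ceil (-r); linarith)
    calc h r ≤ h (-(⌈-r⌉₊ : ℝ)) := h1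
      _ ≤ sSup (Set.range fun k : ℕ => h (-(k:ℝ))) := le_csSup hbdd ⟨_, rfl⟩
      _ = h (-(k₀:ℝ)) := hk₀.symm
  refine ⟨k₀, le_antisymm (ciSup_le hmax)
    (le_ciSup ⟨h (-(k₀:ℝ)), by rintro x ⟨r, rfl⟩; exact hmax r⟩ _), hmax⟩

end helpers

/-- control of the total population size of the γ-BMP
(Corollary 2.3 of the paper, abstract version). Here `S i ω = ⨆ r, χ i ω r` is
the total count of the `i`-th family and `N_tot = ∑ i, S i`. -/
theorem gamma_bmp_population_size_bound
    {Ω : Type*} [MeasurableSpace Ω] (μ : Measure Ω) [IsProbabilityMeasure μ]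
    (t T : ℝ) (ht : 0 < t) (htT : t ≤ T) (n : ℕ)
    (M : Fin n → Ω → ℕ) (χ : Fin n → Ω → ℝ → ℕ) (G : ℝ → ℝ)
    (hMmeas : ∀ i, Measurable (M i))
    (hχmeas : ∀ i r, Measurable fun ω => χ i ω r)
    (hiid : ∀ i j, IdentDistrib (fun ω => (M i ω, χ i ω)) (fun ω => (M j ω, χ j ω)) μ μ)
    (hindep : iIndepFun (fun i ω => (M i ω, χ i ω)) μ)
    (hlaw : ∀ i, ∀ k : ℕ, 1 ≤ k →
      μ {ω | M i ω = k} = ENNReal.ofReal (Real.exp (-t) * (1 - Real.exp (-t)) ^ (k - 1)))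
    (hanti : ∀ i ω, Antitone (χ i ω))
    (hrc : ∀ i ω r, ContinuousWithinAt (χ i ω) (Set.Ici r) r)
    (hbd : ∀ i ω r, χ i ω r ≤ M i ω)
    (hG : ∀ i r, G r = ∫ ω, (χ i ω r : ℝ) ∂μ)
    (hGlim : Tendsto G atBot (nhds 1))
    (η : ℝ) (hη : 0 < η) (α : ℝ) (hα : α ∈ Set.Ioo (0:ℝ) (1/2))
    (hn : max (8 * (2 * Real.exp (2 * t) - Real.exp t) / η ^ 2) 2 ≤ (n : ℝ)) :
    μ {ω | (n : ℝ) * η < |(((∑ i, ⨆ r : ℝ, χ i ω r) : ℕ) : ℝ) - (n : ℝ)|}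
      ≤ ENNReal.ofReal
          (16 * (n : ℝ) ^ 2 * Real.exp (-((n : ℝ) ^ ((1:ℝ) - 2 * α) * η ^ 2 / 32))
            + 32 * Real.exp T * (n : ℝ) ^ 2 *
                Real.exp (-(-Real.log (1 - Real.exp (-T)) * (n : ℝ) ^ α))) := by
  classical
  obtain ⟨hα0, hα2⟩ := hα
  have hT : 0 < T := lt_of_lt_of_le ht htT
  have hn2 : (2:ℝ) ≤ (n:ℝ) := le_trans (le_max_right _ _) hn
  have hn0 : (0:ℝ) < (n:ℝ) := by linarith
  have hn1 : (1:ℝ) ≤ (n:ℝ) := by linarith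
  have hnne : n ≠ 0 := by intro h; rw [h] at hn2; norm_num at hn2
  -- basic exponential facts
  have hexpt0 : (0:ℝ) < Real.exp (-t) := Real.exp_pos _
  have hexpt1 : Real.exp (-t) < 1 := by
    have := Real.exp_lt_exp.2 (show -t < 0 by linarith)
    rwa [Real.exp_zero] at this
  have hexpT0 : (0:ℝ) < Real.exp (-T) := Real.exp_pos _
  have hexpT1 : Real.exp (-T) < 1 := by
    have := Real.exp_lt_exp.2 (show -T < 0 by linarith)
    rwa [Real.exp_zero] at this
  have hexpTle : Real.exp (-T) ≤ Real.exp (-t) := Real.exp_le_exp.2 (by linarith)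
  have honeexpT : (1:ℝ) ≤ Real.exp T := by
    have := Real.exp_le_exp.2 hT.le; rwa [Real.exp_zero] at this
  set q : ℝ := 1 - Real.exp (-t) with hq_def
  set Q : ℝ := 1 - Real.exp (-T) with hQ_def
  have hq0 : 0 ≤ q := by simp only [hq_def]; linarith
  have hq1 : q < 1 := by simp only [hq_def]; linarith
  have hQ0 : 0 < Q := by simp only [hQ_def]; linarith
  have hQ1 : Q < 1 := by simp only [hQ_def]; linarith
  have hqQ : q ≤ Q := by simp only [hq_def, hQ_def]; linarith
  have hinvq : (1 - q)⁻¹ = Real.exp t := by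
    simp only [hq_def, sub_sub_cancel]
    rw [Real.exp_neg, inv_inv]
  set A : ℝ := (n:ℝ) ^ α with hA_def
  have hA1 : 1 ≤ A := Real.one_le_rpow hn1 hα0.le
  set K : ℕ := ⌈A⌉₊ with hK_def
  have hKA : A ≤ (K:ℝ) := Nat.le_ceil A
  have hK1 : (1:ℝ) ≤ (K:ℝ) := le_trans hA1 hKA
  have hK0 : (0:ℝ) < (K:ℝ) := by linarith
  have hK2A : (K:ℝ) ≤ 2*A := by
    have := Nat.ceil_lt_add_one (show (0:ℝ) ≤ A by linarith)
    simp only [hK_def]; linarith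
  set c3 : ℝ := -Real.log Q with hc3_def
  have hc30 : 0 < c3 := by
    simp only [hc3_def]
    have := Real.log_neg hQ0 hQ1; linarith
  -- the total count S and its truncation
  set S : Fin n → Ω → ℕ := fun i ω => ⨆ r : ℝ, χ i ω r with hS_def
  have hSkey : ∀ i ω, ∃ k₀ : ℕ, S i ω = χ i ω (-(k₀:ℝ)) ∧ ∀ r, χ i ω r ≤ χ i ω (-(k₀:ℝ)) :=
    fun i ω => nat_antitone_iSup (hanti i ω) (hbd i ω)
  have hSbd : ∀ i ω, S i ω ≤ M i ω := by
    intro i ω; obtain ⟨k₀, h1, _⟩ := hSkey i ω; rw [h1]; exact hbd i ω _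
  have hSge : ∀ i ω r, χ i ω r ≤ S i ω := by
    intro i ω r; obtain ⟨k₀, h1, h2⟩ := hSkey i ω; rw [h1]; exact h2 r
  have hSmeasSet : ∀ i (c : ℕ), MeasurableSet {ω | c ≤ S i ω} := by
    intro i c
    have heq : {ω | c ≤ S i ω} = ⋃ k : ℕ, {ω | c ≤ χ i ω (-(k:ℝ))} := by
      ext ω
      simp only [Set.mem_setOf_eq, Set.mem_iUnion]
      constructor
      · intro h
        obtain ⟨k₀, h1, _⟩ := hSkey i ω
        exact ⟨k₀, by rw [← h1]; exact h⟩
      · rintro ⟨k, hk⟩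
        exact le_trans hk (hSge i ω _)
    rw [heq]
    exact MeasurableSet.iUnion fun k =>
      (hχmeas i _) ((Set.to_countable _).measurableSet (s := Set.Ici c))
  have hSmeas : ∀ i, Measurable (S i) := by
    intro i
    apply measurable_to_nat
    intro ω
    have heq : S i ⁻¹' {S i ω} = {ω' | S i ω ≤ S i ω'} \ {ω' | S i ω + 1 ≤ S i ω'} := by
      ext ω'; simp only [Set.mem_preimage, Set.mem_singleton_iff, Set.mem_diff,
        Set.mem_setOf_eq]; omega
    rw [heq]
    exact (hSmeasSet i _).diff (hSmeasSet i _)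
  set Z : Fin n → Ω → ℕ := fun i ω => min (S i ω) K with hZ_def
  set D : Fin n → Ω → ℕ := fun i ω => S i ω - Z i ω with hD_def
  have hZmeas : ∀ i, Measurable (Z i) := fun i => (hSmeas i).min measurable_const
  have hDmeas : ∀ i, Measurable (D i) := fun i => (hSmeas i).sub (hZmeas i)
  -- tail bounds for M and S
  have htailM : ∀ i (j : ℕ), μ {ω | j < M i ω} ≤ ENNReal.ofReal (q ^ j) := by
    intro i j
    have hMeq : ∀ k : ℕ, MeasurableSet {ω | M i ω = k} := fun k =>
      hMmeas i (measurableSet_singleton k)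
    have hsum : ∀ J : ℕ, ∑ k ∈ Finset.Icc 1 J, (Real.exp (-t) * q ^ (k-1)) = 1 - q ^ J := by
      intro J
      induction J with
      | zero => simp
      | succ J ih =>
          rw [Finset.sum_Icc_succ_top (by omega : 1 ≤ J + 1), ih]
          have he : Real.exp (-t) = 1 - q := by simp [hq_def]
          have hJ : J + 1 - 1 = J := by omega
          rw [he, hJ, pow_succ]
          ring
    have hun : μ (⋃ k ∈ Finset.Icc 1 j, {ω | M i ω = k})
        = ∑ k ∈ Finset.Icc 1 j, μ {ω | M i ω = k} := by
      refine measure_biUnion_finset ?_ (fun k _ => hMeq k)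
      intro a _ b _ hab
      refine Set.disjoint_left.2 fun ω h1 h2 => hab ?_
      simp only [Set.mem_setOf_eq] at h1 h2
      omega
    have hsub : (⋃ k ∈ Finset.Icc 1 j, {ω | M i ω = k}) ⊆ {ω | j < M i ω}ᶜ := by
      intro ω hω
      simp only [Set.mem_iUnion, Finset.mem_Icc, Set.mem_setOf_eq] at hω
      obtain ⟨k, ⟨hk1, hk2⟩, hk3⟩ := hω
      simp only [Set.mem_compl_iff, Set.mem_setOf_eq, not_lt]
      omega
    have hcompl : ENNReal.ofReal (1 - q ^ j) ≤ μ ({ω | j < M i ω}ᶜ) := by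
      calc ENNReal.ofReal (1 - q ^ j)
          = ∑ k ∈ Finset.Icc 1 j, μ {ω | M i ω = k} := by
            rw [Finset.sum_congr rfl (fun k hk => hlaw i k (Finset.mem_Icc.1 hk).1),
              ← ENNReal.ofReal_sum_of_nonneg (fun k _ => by positivity), hsum j]
        _ = μ (⋃ k ∈ Finset.Icc 1 j, {ω | M i ω = k}) := hun.symm
        _ ≤ μ ({ω | j < M i ω}ᶜ) := measure_mono hsub
    have hms : MeasurableSet {ω | j < M i ω} :=
      hMmeas i ((Set.to_countable _).measurableSet (s := Set.Ioi j))
    have h1 : μ {ω | j < M i ω} = 1 - μ ({ω | j < M i ω}ᶜ) := by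
      have h2 := measure_compl hms.compl (measure_ne_top μ _)
      rw [compl_compl] at h2
      rw [h2, measure_univ]
    rw [h1]
    calc 1 - μ ({ω | j < M i ω}ᶜ) ≤ 1 - ENNReal.ofReal (1 - q ^ j) :=
        tsub_le_tsub_left hcompl 1
      _ = ENNReal.ofReal (q ^ j) := by
          have hq1j : q ^ j ≤ 1 := pow_le_one₀ hq0 hq1.le
          rw [← ENNReal.ofReal_one, ← ENNReal.ofReal_sub _ (by linarith : (0:ℝ) ≤ 1 - q ^ j)]
          congr 1
          ring
  have htailS : ∀ i (j : ℕ), μ {ω | j < S i ω} ≤ ENNReal.ofReal (q ^ j) := by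
    intro i j
    refine le_trans (measure_mono ?_) (htailM i j)
    intro ω h
    exact lt_of_lt_of_le h (hSbd i ω)
  have hgeom : ∑' j : ℕ, ENNReal.ofReal (q ^ j) = ENNReal.ofReal (Real.exp t) := by
    rw [← ENNReal.ofReal_tsum_of_nonneg (fun j => by positivity)
      (summable_geometric_of_lt_one hq0 hq1), tsum_geometric_of_lt_one hq0 hq1, hinvq]
  have hMlint : ∀ i, ∫⁻ ω, (M i ω : ℝ≥0∞) ∂μ ≤ ENNReal.ofReal (Real.exp t) := by
    intro i
    rw [lintegral_natCast_eq_tsum (hMmeas i), ← hgeom]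
    exact ENNReal.tsum_le_tsum (htailM i)
  have hMfin : ∀ i, ∫⁻ ω, (M i ω : ℝ≥0∞) ∂μ ≠ ⊤ :=
    fun i => (lt_of_le_of_lt (hMlint i) ENNReal.ofReal_lt_top).ne
  have hχint : ∀ i r, Integrable (fun ω => (χ i ω r : ℝ)) μ := by
    intro i r
    refine integrable_natCast_of_lintegral_ne_top (hχmeas i r) ?_
    refine ne_top_of_le_ne_top (hMfin i) (lintegral_mono fun ω => ?_)
    exact (Nat.cast_le (α := ℝ≥0∞)).2 (hbd i ω r)
  -- mean of S is 1
  have hlintS : ∀ i, ∫⁻ ω, (S i ω : ℝ≥0∞) ∂μ = 1 := by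
    intro i
    have hpt : ∀ ω, (S i ω : ℝ≥0∞) = ⨆ k : ℕ, (χ i ω (-(k:ℝ)) : ℝ≥0∞) := by
      intro ω
      refine le_antisymm ?_ (iSup_le fun k => Nat.cast_le.2 (hSge i ω _))
      obtain ⟨k₀, h1, _⟩ := hSkey i ω
      rw [h1]
      exact le_iSup (fun k : ℕ => (χ i ω (-(k:ℝ)) : ℝ≥0∞)) k₀
    have hmono : Monotone fun (k : ℕ) (ω : Ω) => (χ i ω (-(k:ℝ)) : ℝ≥0∞) := by
      intro k l hkl ω
      exact Nat.cast_le.2 (hanti i ω (by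
        simp only [neg_le_neg_iff]
        exact_mod_cast hkl))
    have hmeask : ∀ k : ℕ, Measurable fun ω => (χ i ω (-(k:ℝ)) : ℝ≥0∞) :=
      fun k => measurable_from_top.comp (hχmeas i _)
    rw [lintegral_congr hpt, lintegral_iSup hmeask hmono]
    have hfin : ∀ k : ℕ, ∫⁻ ω, (χ i ω (-(k:ℝ)) : ℝ≥0∞) ∂μ ≠ ⊤ := by
      intro k
      refine ne_top_of_le_ne_top (hMfin i) (lintegral_mono fun ω => ?_)
      exact_mod_cast Nat.cast_le.2 (hbd i ω _)
    have hGk : ∀ k : ℕ, ∫⁻ ω, (χ i ω (-(k:ℝ)) : ℝ≥0∞) ∂μ = ENNReal.ofReal (G (-(k:ℝ))) := by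
      intro k
      rw [hG i (-(k:ℝ)), integral_natCast_eq_toReal (hχmeas i _),
        ENNReal.ofReal_toReal (hfin k)]
    rw [iSup_congr hGk]
    have hmono2 : Monotone fun k : ℕ => ENNReal.ofReal (G (-(k:ℝ))) := by
      intro k l hkl
      apply ENNReal.ofReal_le_ofReal
      rw [hG i, hG i]
      refine integral_mono (hχint i _) (hχint i _) fun ω => ?_
      exact Nat.cast_le.2 (hanti i ω (by
        simp only [neg_le_neg_iff]
        exact_mod_cast hkl))
    have htend : Tendsto (fun k : ℕ => ENNReal.ofReal (G (-(k:ℝ)))) atTop (nhds 1) := by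
      have h1 : Tendsto (fun k : ℕ => -(k:ℝ)) atTop atBot :=
        tendsto_neg_atBot_iff.mpr tendsto_natCast_atTop_atTop
      have h2 := (ENNReal.continuous_ofReal.tendsto 1).comp (hGlim.comp h1)
      simpa [Function.comp_def] using h2
    exact tendsto_nhds_unique (tendsto_atTop_iSup hmono2) htend
  have hSfin : ∀ i, ∫⁻ ω, (S i ω : ℝ≥0∞) ∂μ ≠ ⊤ := fun i => by rw [hlintS i]; simp
  have hES : ∀ i, ∫ ω, (S i ω : ℝ) ∂μ = 1 := by
    intro i; rw [integral_natCast_eq_toReal (hSmeas i), hlintS i]; simp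
  have hSint : ∀ i, Integrable (fun ω => (S i ω : ℝ)) μ :=
    fun i => integrable_natCast_of_lintegral_ne_top (hSmeas i) (hSfin i)
  -- truncation error
  have hDtail : ∀ i (j : ℕ), μ {ω | j < D i ω} ≤ ENNReal.ofReal (q ^ (K + j)) := by
    intro i j
    refine le_trans (measure_mono ?_) (htailS i (K + j))
    intro ω h
    simp only [Set.mem_setOf_eq, hD_def, hZ_def] at h ⊢
    rcases le_total (S i ω) K with h' | h'
    · rw [min_eq_left h'] at h; omega
    · rw [min_eq_right h'] at h; omega
  have hlintD : ∀ i, ∫⁻ ω, (D i ω : ℝ≥0∞) ∂μ ≤ ENNReal.ofReal (q ^ K * Real.exp t) := by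
    intro i
    rw [lintegral_natCast_eq_tsum (hDmeas i)]
    calc ∑' j : ℕ, μ {ω | j < D i ω} ≤ ∑' j : ℕ, ENNReal.ofReal (q ^ (K + j)) :=
        ENNReal.tsum_le_tsum (hDtail i)
      _ = ENNReal.ofReal (q ^ K) * ∑' j : ℕ, ENNReal.ofReal (q ^ j) := by
          rw [← ENNReal.tsum_mul_left]
          refine tsum_congr fun j => ?_
          rw [pow_add, ENNReal.ofReal_mul (by positivity)]
      _ = ENNReal.ofReal (q ^ K * Real.exp t) := by
          rw [hgeom, ← ENNReal.ofReal_mul (by positivity)]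
  set δ : ℝ := Q ^ K * Real.exp T with hδ_def
  have hδ0 : 0 ≤ δ := by positivity
  set eps : Fin n → ℝ := fun i => ∫ ω, (D i ω : ℝ) ∂μ with heps_def
  have heps0 : ∀ i, 0 ≤ eps i := fun i => integral_nonneg fun ω => by positivity
  have heps_le : ∀ i, eps i ≤ δ := by
    intro i
    have h1 : eps i = (∫⁻ ω, (D i ω : ℝ≥0∞) ∂μ).toReal := integral_natCast_eq_toReal (hDmeas i)
    rw [h1]
    calc (∫⁻ ω, (D i ω : ℝ≥0∞) ∂μ).toReal
        ≤ (ENNReal.ofReal (q ^ K * Real.exp t)).toReal :=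
          ENNReal.toReal_mono ENNReal.ofReal_ne_top (hlintD i)
      _ = q ^ K * Real.exp t := ENNReal.toReal_ofReal (by positivity)
      _ ≤ δ := by
          have h2 : q ^ K ≤ Q ^ K := pow_le_pow_left₀ hq0 hqQ K
          have h3 : Real.exp t ≤ Real.exp T := Real.exp_le_exp.2 htT
          simp only [hδ_def]
          nlinarith [pow_nonneg hq0 K, Real.exp_pos t]
  have hDint : ∀ i, Integrable (fun ω => (D i ω : ℝ)) μ :=
    fun i => integrable_natCast_of_lintegral_ne_top (hDmeas i)
      (lt_of_le_of_lt (hlintD i) ENNReal.ofReal_lt_top).ne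
  have hZint : ∀ i, Integrable (fun ω => (Z i ω : ℝ)) μ := by
    intro i
    refine integrable_natCast_of_lintegral_ne_top (hZmeas i) ?_
    refine ne_top_of_le_ne_top (hSfin i) (lintegral_mono fun ω => ?_)
    exact (Nat.cast_le (α := ℝ≥0∞)).2 (min_le_left _ _)
  set m : Fin n → ℝ := fun i => ∫ ω, (Z i ω : ℝ) ∂μ with hm_def
  have hm_eq : ∀ i, m i = 1 - eps i := by
    intro i
    have hpt : ∀ ω, (S i ω : ℝ) = (Z i ω : ℝ) + (D i ω : ℝ) := by
      intro ω
      have : S i ω = Z i ω + D i ω := by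
        simp only [hD_def, hZ_def]
        omega
      exact_mod_cast congrArg (Nat.cast : ℕ → ℝ) this
    have h1 : ∫ ω, (S i ω : ℝ) ∂μ = m i + eps i := by
      rw [show (fun ω => (S i ω : ℝ)) = fun ω => (Z i ω : ℝ) + (D i ω : ℝ) from funext hpt]
      rw [integral_add (hZint i) (hDint i)]
    rw [hES i] at h1
    linarith
  have hm0 : ∀ i, 0 ≤ m i := fun i => integral_nonneg fun ω => by positivity
  have hm1 : ∀ i, m i ≤ 1 := fun i => by have := heps0 i; rw [hm_eq i]; linarith
  -- centered truncated variables
  set W : Fin n → Ω → ℝ := fun i ω => (Z i ω : ℝ) - m i with hW_def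
  have hZcast : ∀ i, Measurable fun ω => (Z i ω : ℝ) :=
    fun i => measurable_from_top.comp (hZmeas i)
  have hWmeas : ∀ i, Measurable (W i) := fun i => (hZcast i).sub measurable_const
  have hWbd : ∀ i ω, |W i ω| ≤ (K:ℝ) := by
    intro i ω
    have h1 : (0:ℝ) ≤ (Z i ω : ℝ) := by positivity
    have h2 : (Z i ω : ℝ) ≤ (K:ℝ) := by exact_mod_cast Nat.cast_le.2 (min_le_right _ _)
    rw [abs_le]
    constructor
    · simp only [hW_def]; have := hm1 i; linarith
    · simp only [hW_def]; have := hm0 i; linarith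
  have hWint : ∀ i, Integrable (W i) μ := fun i => (hZint i).sub (integrable_const _)
  have hWzero : ∀ i, ∫ ω, W i ω ∂μ = 0 := by
    intro i
    simp only [hW_def]
    rw [integral_sub (hZint i) (integrable_const _), integral_const]
    simp [hm_def]
  have hW2int : ∀ i, Integrable (fun ω => (W i ω)^2) μ := by
    intro i
    refine Integrable.mono' (integrable_const ((K:ℝ)^2))
      (((hWmeas i).pow_const 2).aestronglyMeasurable) (ae_of_all _ fun ω => ?_)
    rw [Real.norm_eq_abs, abs_pow]
    exact pow_le_pow_left₀ (abs_nonneg _) (hWbd i ω) 2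
  have hW2 : ∀ i, ∫ ω, (W i ω)^2 ∂μ ≤ (K:ℝ)^2 := by
    intro i
    have hle : ∀ ω, (W i ω)^2 ≤ (K:ℝ)^2 := by
      intro ω
      have h := hWbd i ω
      nlinarith [abs_nonneg (W i ω), sq_abs (W i ω)]
    have h2 := integral_mono (μ := μ) (hW2int i) (integrable_const ((K:ℝ)^2)) hle
    simpa using h2
  -- independence of the W's
  have hWindep : iIndepFun W μ := by
    set ψ : ℕ × (ℝ → ℕ) → ℕ := fun x => ⨆ k : ℕ, min (x.2 (-(k:ℝ))) K with hψ_def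
    have hψbdd : ∀ x : ℕ × (ℝ → ℕ), BddAbove (Set.range fun k : ℕ => min (x.2 (-(k:ℝ))) K) :=
      fun x => ⟨K, by rintro y ⟨k, rfl⟩; exact min_le_right _ _⟩
    have hψle : ∀ x (k : ℕ), min (x.2 (-(k:ℝ))) K ≤ ψ x := fun x k => le_ciSup (hψbdd x) k
    have hψatt : ∀ x : ℕ × (ℝ → ℕ), ∃ k₁ : ℕ, ψ x = min (x.2 (-(k₁:ℝ))) K := by
      intro x
      have hmem := Nat.sSup_mem (Set.range_nonempty fun k : ℕ => min (x.2 (-(k:ℝ))) K) (hψbdd x)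
      obtain ⟨k₁, hk₁⟩ := hmem
      exact ⟨k₁, by simp only [hψ_def, iSup]; exact hk₁.symm⟩
    have hψsetm : ∀ c : ℕ, MeasurableSet {x : ℕ × (ℝ → ℕ) | c ≤ ψ x} := by
      intro c
      have heq : {x : ℕ × (ℝ → ℕ) | c ≤ ψ x} = ⋃ k : ℕ, {x | c ≤ min (x.2 (-(k:ℝ))) K} := by
        ext x
        simp only [Set.mem_setOf_eq, Set.mem_iUnion]
        constructor
        · intro h
          obtain ⟨k₁, hk₁⟩ := hψatt x
          exact ⟨k₁, hk₁ ▸ h⟩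
        · rintro ⟨k, hk⟩
          exact le_trans hk (hψle x k)
      rw [heq]
      refine MeasurableSet.iUnion fun k => ?_
      have hm : Measurable fun x : ℕ × (ℝ → ℕ) => min (x.2 (-(k:ℝ))) K :=
        ((measurable_pi_apply _).comp measurable_snd).min measurable_const
      exact hm ((Set.to_countable _).measurableSet (s := Set.Ici c))
    have hψmeas : Measurable ψ := by
      apply measurable_to_nat
      intro x
      have heq : ψ ⁻¹' {ψ x} = {y | ψ x ≤ ψ y} \ {y | ψ x + 1 ≤ ψ y} := by
        ext y
        simp only [Set.mem_preimage, Set.mem_singleton_iff, Set.mem_diff, Set.mem_setOf_eq]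
        omega
      rw [heq]
      exact (hψsetm _).diff (hψsetm _)
    have hψZ : ∀ i ω, ψ (M i ω, χ i ω) = Z i ω := by
      intro i ω
      refine le_antisymm ?_ ?_
      · obtain ⟨k₁, hk₁⟩ := hψatt (M i ω, χ i ω)
        rw [hk₁]
        exact min_le_min (hSge i ω _) le_rfl
      · obtain ⟨k₀, h1, _⟩ := hSkey i ω
        have h2 : Z i ω = min (χ i ω (-(k₀:ℝ))) K := by
          simp only [hZ_def]
          rw [h1]
        rw [h2]
        exact hψle (M i ω, χ i ω) k₀
    set g : Fin n → (ℕ × (ℝ → ℕ)) → ℝ := fun i x => (ψ x : ℝ) - m i with hg_def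
    have hgmeas : ∀ i, Measurable (g i) :=
      fun i => (measurable_from_top.comp hψmeas).sub measurable_const
    have h := hindep.comp g hgmeas
    have heq : (fun i => g i ∘ fun ω => (M i ω, χ i ω)) = W := by
      funext i ω
      simp only [Function.comp_apply, hg_def, hW_def, hψZ i ω]
    rwa [heq] at h
  -- mgf bound
  have hmgf_one : ∀ i (l : ℝ), |l| * K ≤ 1 → mgf (W i) μ l ≤ Real.exp (3/4 * l^2 * K^2) := by
    intro i l hl
    have hint_exp : Integrable (fun ω => Real.exp (l * W i ω)) μ := by
      refine Integrable.mono' (integrable_const (Real.exp (|l| * K)))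
        (((hWmeas i).const_mul l).exp.aestronglyMeasurable) (ae_of_all _ fun ω => ?_)
      rw [Real.norm_eq_abs, Real.abs_exp]
      apply Real.exp_le_exp.2
      calc l * W i ω ≤ |l * W i ω| := le_abs_self _
        _ = |l| * |W i ω| := abs_mul _ _
        _ ≤ |l| * K := mul_le_mul_of_nonneg_left (hWbd i ω) (abs_nonneg l)
    have hptw : ∀ ω, Real.exp (l * W i ω) ≤ 1 + l * W i ω + 3/4 * l^2 * (W i ω)^2 := by
      intro ω
      have h1 : |l * W i ω| ≤ 1 := by
        rw [abs_mul]
        exact le_trans (mul_le_mul_of_nonneg_left (hWbd i ω) (abs_nonneg l)) hl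
      have h2 := exp_le_quad h1
      calc Real.exp (l * W i ω) ≤ 1 + l * W i ω + 3/4 * (l * W i ω)^2 := h2
        _ = 1 + l * W i ω + 3/4 * l^2 * (W i ω)^2 := by ring
    have hint1 : Integrable (fun ω => 1 + l * W i ω) μ :=
      (integrable_const 1).add ((hWint i).const_mul l)
    have hint2 : Integrable (fun ω => 3/4 * l^2 * (W i ω)^2) μ :=
      (hW2int i).const_mul (3/4 * l^2)
    have hint_rhs : Integrable (fun ω => 1 + l * W i ω + 3/4 * l^2 * (W i ω)^2) μ :=
      hint1.add hint2
    have hcalc : ∫ ω, (1 + l * W i ω + 3/4 * l^2 * (W i ω)^2) ∂μ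
        = 1 + 3/4 * l^2 * ∫ ω, (W i ω)^2 ∂μ := by
      rw [integral_add hint1 hint2, integral_add (integrable_const 1) ((hWint i).const_mul l),
        integral_const, integral_const_mul, integral_const_mul, hWzero i]
      simp
    have hfinal : mgf (W i) μ l ≤ 1 + 3/4 * l^2 * K^2 := by
      have h3 : mgf (W i) μ l = ∫ ω, Real.exp (l * W i ω) ∂μ := rfl
      rw [h3]
      refine le_trans (integral_mono hint_exp hint_rhs hptw) ?_
      rw [hcalc]
      nlinarith [sq_nonneg l, hW2 i]
    refine le_trans hfinal ?_
    have h4 := Real.add_one_le_exp (3/4 * l^2 * K^2)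
    linarith
  set X : Ω → ℝ := fun ω => ∑ i, W i ω with hX_def
  have hXmeas : Measurable X := by
    apply Finset.measurable_sum
    exact fun i _ => hWmeas i
  have hXbd : ∀ ω, |X ω| ≤ (n:ℝ) * K := by
    intro ω
    calc |X ω| ≤ ∑ i, |W i ω| := Finset.abs_sum_le_sum_abs _ _
      _ ≤ ∑ _i : Fin n, (K:ℝ) := Finset.sum_le_sum fun i _ => hWbd i ω
      _ = (n:ℝ) * K := by simp [Finset.sum_const, Finset.card_univ, mul_comm]
  have hintexpX : ∀ l : ℝ, Integrable (fun ω => Real.exp (l * X ω)) μ := by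
    intro l
    refine Integrable.mono' (integrable_const (Real.exp (|l| * ((n:ℝ)*K))))
      ((hXmeas.const_mul l).exp.aestronglyMeasurable) (ae_of_all _ fun ω => ?_)
    rw [Real.norm_eq_abs, Real.abs_exp]
    apply Real.exp_le_exp.2
    calc l * X ω ≤ |l * X ω| := le_abs_self _
      _ = |l| * |X ω| := abs_mul _ _
      _ ≤ |l| * ((n:ℝ)*K) := by
          apply mul_le_mul_of_nonneg_left (hXbd ω) (abs_nonneg l)
  have hmgfX : ∀ l : ℝ, |l| * K ≤ 1 → mgf X μ l ≤ Real.exp ((n:ℝ) * (3/4 * l^2 * K^2)) := by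
    intro l hl
    have hXsum : X = ∑ i ∈ Finset.univ, W i := by
      funext ω; rw [Finset.sum_apply]
    rw [hXsum, hWindep.mgf_sum hWmeas Finset.univ]
    calc ∏ i, mgf (W i) μ l ≤ ∏ _i : Fin n, Real.exp (3/4 * l^2 * K^2) :=
        Finset.prod_le_prod (fun i _ => mgf_nonneg) (fun i _ => hmgf_one i l hl)
      _ = Real.exp ((n:ℝ) * (3/4 * l^2 * K^2)) := by
          rw [Finset.prod_const, Finset.card_univ, Fintype.card_fin, ← Real.exp_nat_mul]
  -- two-sided Chernoff bound
  have hcher : ∀ s l : ℝ, 0 ≤ l → l * K ≤ 1 →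
      μ {ω | s < |X ω|} ≤ ENNReal.ofReal (2 * Real.exp (-l*s + (n:ℝ)*(3/4*l^2*K^2))) := by
    intro s l hl0 hlK
    have habs : |l| * K ≤ 1 := by rwa [abs_of_nonneg hl0]
    have habs' : |(-l)| * K ≤ 1 := by rwa [abs_neg, abs_of_nonneg hl0]
    set bnd : ℝ := Real.exp (-l*s + (n:ℝ)*(3/4*l^2*K^2)) with hbnd_def
    have hbnd0 : 0 ≤ bnd := by rw [hbnd_def]; positivity
    have hbnd_eq : bnd = Real.exp (-l*s) * Real.exp ((n:ℝ)*(3/4*l^2*K^2)) := by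
      rw [hbnd_def, ← Real.exp_add]
    have hup : (μ {ω | s ≤ X ω}).toReal ≤ bnd := by
      refine le_trans (measure_ge_le_exp_mul_mgf s hl0 (hintexpX l)) ?_
      rw [hbnd_eq]
      exact mul_le_mul_of_nonneg_left (hmgfX l habs) (Real.exp_pos _).le
    have hdown : (μ {ω | X ω ≤ -s}).toReal ≤ bnd := by
      have h := measure_le_le_exp_mul_mgf (X := X) (-s) (neg_nonpos.2 hl0) (hintexpX (-l))
      calc (μ {ω | X ω ≤ -s}).toReal ≤ Real.exp (-(-l) * -s) * mgf X μ (-l) := h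
        _ ≤ Real.exp (-(-l) * -s) * Real.exp ((n:ℝ)*(3/4*(-l)^2*K^2)) :=
            mul_le_mul_of_nonneg_left (hmgfX (-l) habs') (Real.exp_pos _).le
        _ = bnd := by
            rw [hbnd_eq, show -(-l) * -s = -l * s from by ring,
              show ((-l):ℝ)^2 = l^2 from by ring]
    have hsubset : {ω | s < |X ω|} ⊆ {ω | s ≤ X ω} ∪ {ω | X ω ≤ -s} := by
      intro ω h
      simp only [Set.mem_setOf_eq, Set.mem_union] at h ⊢
      rcases lt_abs.1 h with h1 | h1
      · exact Or.inl h1.le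
      · exact Or.inr (by linarith)
    calc μ {ω | s < |X ω|} ≤ μ ({ω | s ≤ X ω} ∪ {ω | X ω ≤ -s}) := measure_mono hsubset
      _ ≤ μ {ω | s ≤ X ω} + μ {ω | X ω ≤ -s} := measure_union_le _ _
      _ ≤ ENNReal.ofReal bnd + ENNReal.ofReal bnd := by
          rw [← ENNReal.ofReal_toReal (measure_ne_top μ {ω | s ≤ X ω}),
            ← ENNReal.ofReal_toReal (measure_ne_top μ {ω | X ω ≤ -s})]
          exact add_le_add (ENNReal.ofReal_le_ofReal hup) (ENNReal.ofReal_le_ofReal hdown)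
      _ = ENNReal.ofReal (2 * bnd) := by
          rw [← ENNReal.ofReal_add hbnd0 hbnd0]
          congr 1
          ring
  -- overshoot event
  have hQKc3 : Q^K ≤ Real.exp (-(c3 * A)) := by
    have h1 : Q^K = Real.exp ((K:ℝ) * Real.log Q) := by
      rw [← Real.log_pow, Real.exp_log (pow_pos hQ0 K)]
    rw [h1]
    apply Real.exp_le_exp.2
    have hlogQ : Real.log Q < 0 := Real.log_neg hQ0 hQ1
    have h2 := mul_le_mul_of_nonpos_right hKA hlogQ.le
    have h3 : -(c3 * A) = A * Real.log Q := by simp only [hc3_def]; ring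
    rw [h3]
    linarith
  have hBbd : μ (⋃ i, {ω | K < S i ω}) ≤ ENNReal.ofReal ((n:ℝ) * Real.exp (-(c3*A))) := by
    calc μ (⋃ i, {ω | K < S i ω}) ≤ ∑' i : Fin n, μ {ω | K < S i ω} := measure_iUnion_le _
      _ ≤ ∑' _i : Fin n, ENNReal.ofReal (Real.exp (-(c3*A))) := by
          refine ENNReal.tsum_le_tsum fun i => le_trans (htailS i K) ?_
          exact ENNReal.ofReal_le_ofReal
            (le_trans (pow_le_pow_left₀ hq0 hqQ K) hQKc3)
      _ = (n:ℝ≥0∞) * ENNReal.ofReal (Real.exp (-(c3*A))) := by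
          rw [tsum_fintype]
          simp [Finset.sum_const, Finset.card_univ, nsmul_eq_mul]
      _ = ENNReal.ofReal ((n:ℝ) * Real.exp (-(c3*A))) := by
          rw [ENNReal.ofReal_mul (by positivity), ENNReal.ofReal_natCast]
    -- final assembly
  suffices hmain : μ {ω | (n:ℝ) * η < |(((∑ i, S i ω : ℕ)):ℝ) - (n:ℝ)|}
      ≤ ENNReal.ofReal (16*(n:ℝ)^2*Real.exp (-((n:ℝ)^((1:ℝ)-2*α)*η^2/32))
          + 32*Real.exp T*(n:ℝ)^2*Real.exp (-(c3*A))) by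
    exact hmain
  set E : Set Ω := {ω | (n:ℝ) * η < |(((∑ i, S i ω : ℕ)):ℝ) - (n:ℝ)|} with hE_def
  set B : Set Ω := ⋃ i, {ω | K < S i ω} with hB_def
  by_cases hbig : (1:ℝ) ≤ 32 * Real.exp T * (n:ℝ)^2 * Real.exp (-(c3 * A))
  · refine le_trans prob_le_one ?_
    rw [← ENNReal.ofReal_one]
    apply ENNReal.ofReal_le_ofReal
    have h1 : (0:ℝ) ≤ 16 * (n:ℝ)^2 * Real.exp (-((n:ℝ)^((1:ℝ) - 2*α) * η^2 / 32)) := by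
      positivity
    linarith
  · push_neg at hbig
    have hδlt : δ < 1 / (32 * (n:ℝ)^2) := by
      have h1 : δ ≤ Real.exp (-(c3*A)) * Real.exp T := by
        rw [hδ_def]
        exact mul_le_mul_of_nonneg_right hQKc3 (Real.exp_pos _).le
      rw [lt_div_iff₀ (by positivity)]
      calc δ * (32 * (n:ℝ)^2) ≤ (Real.exp (-(c3*A)) * Real.exp T) * (32*(n:ℝ)^2) :=
            mul_le_mul_of_nonneg_right h1 (by positivity)
        _ = 32 * Real.exp T * (n:ℝ)^2 * Real.exp (-(c3*A)) := by ring
        _ < 1 := hbig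
    have hC1 : (1:ℝ) ≤ 2 * Real.exp (2*t) - Real.exp t := by
      have h2t : Real.exp (2*t) = Real.exp t * Real.exp t := by
        rw [← Real.exp_add]; ring_nf
      have h3 : (1:ℝ) ≤ Real.exp t := by
        have := Real.exp_le_exp.2 ht.le; rwa [Real.exp_zero] at this
      nlinarith only [h2t, h3]
    have hnη : 4 ≤ (n:ℝ) * η := by
      have h1 : 8 * (2*Real.exp (2*t) - Real.exp t) / η^2 ≤ (n:ℝ) := le_trans (le_max_left _ _) hn
      have h2 : 8 * (2*Real.exp (2*t) - Real.exp t) ≤ (n:ℝ) * η^2 := by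
        rwa [div_le_iff₀ (by positivity)] at h1
      have h3 : 8 ≤ (n:ℝ) * η^2 := by nlinarith only [h2, hC1]
      have h4 : (16:ℝ) ≤ ((n:ℝ)*η)^2 := by
        nlinarith only [mul_le_mul_of_nonneg_left h3 hn0.le, hn2, hn0]
      nlinarith only [h4, mul_nonneg hn0.le hη.le]
    have hnδ : (n:ℝ)*δ ≤ 1/64 := by
      have h1 : (n:ℝ)*δ < (n:ℝ)*(1/(32*(n:ℝ)^2)) := mul_lt_mul_of_pos_left hδlt hn0
      have h2 : (n:ℝ)*(1/(32*(n:ℝ)^2)) ≤ 1/64 := by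
        rw [mul_one_div, div_le_div_iff₀ (by positivity) (by norm_num)]
        nlinarith only [hn2, hn0]
      linarith only [h1, h2]
    set sdev : ℝ := (n:ℝ)*η - (n:ℝ)*δ with hsdev_def
    clear_value sdev
    have hsdev_lb : 255/256 * ((n:ℝ)*η) ≤ sdev := by
      rw [hsdev_def]
      have h1 : 1/64 ≤ (n:ℝ)*η/256 := by linarith only [hnη]
      linarith only [h1, hnδ]
    have hsdev0 : 0 < sdev := by linarith only [hsdev_lb, hnη]
    have hEsub : E ⊆ {ω | sdev < |X ω|} ∪ B := by
      intro ω hω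
      by_cases hB' : ∀ i, S i ω ≤ K
      · left
        have hZS : ∀ i, Z i ω = S i ω := fun i => by
          simp only [hZ_def]; exact min_eq_left (hB' i)
        have hXω : X ω = (((∑ i, S i ω : ℕ)):ℝ) - ∑ i, m i := by
          simp only [hX_def, hW_def]
          rw [Finset.sum_sub_distrib]
          congr 1
          push_cast
          exact Finset.sum_congr rfl fun i _ => by rw [hZS i]
        have hmsum : ∑ i, m i = (n:ℝ) - ∑ i, eps i := by
          rw [Finset.sum_congr rfl fun i _ => hm_eq i, Finset.sum_sub_distrib]
          simp [Finset.card_univ]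
        have heps_ub : ∑ i, eps i ≤ (n:ℝ)*δ := by
          calc ∑ i, eps i ≤ ∑ _i : Fin n, δ := Finset.sum_le_sum fun i _ => heps_le i
            _ = (n:ℝ)*δ := by simp [Finset.card_univ, mul_comm]
        have heps_lb : 0 ≤ ∑ i, eps i := Finset.sum_nonneg fun i _ => heps0 i
        have hωE : (n:ℝ)*η < |(((∑ i, S i ω : ℕ)):ℝ) - (n:ℝ)| := hω
        have hXeq : X ω = ((((∑ i, S i ω : ℕ)):ℝ) - (n:ℝ)) + ∑ i, eps i := by
          rw [hXω, hmsum]; ring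
        have habs : |(((∑ i, S i ω : ℕ)):ℝ) - (n:ℝ)| - |∑ i, eps i| ≤ |X ω| := by
          rw [hXeq]
          have h5 := abs_sub_abs_le_abs_sub ((((∑ i, S i ω : ℕ)):ℝ) - (n:ℝ)) (-(∑ i, eps i))
          simpa [sub_neg_eq_add] using h5
        have habs2 : |∑ i, eps i| ≤ (n:ℝ)*δ := by
          rw [abs_of_nonneg heps_lb]; exact heps_ub
        simp only [Set.mem_setOf_eq]
        rw [hsdev_def]
        linarith only [hωE, habs, habs2]
      · right
        push_neg at hB'
        obtain ⟨i, hi⟩ := hB'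
        exact Set.mem_iUnion.2 ⟨i, hi⟩
    have hstep : μ E ≤ μ {ω | sdev < |X ω|} + μ B :=
      le_trans (measure_mono hEsub) (measure_union_le _ _)
    have hBB : μ B ≤ ENNReal.ofReal (32 * Real.exp T * (n:ℝ)^2 * Real.exp (-(c3*A))) := by
      refine le_trans hBbd (ENNReal.ofReal_le_ofReal ?_)
      have ha : (n:ℝ) ≤ (n:ℝ)^2 := by nlinarith only [hn2, hn0]
      have hb : (n:ℝ)^2 ≤ 32*Real.exp T*(n:ℝ)^2 := by
        nlinarith only [honeexpT, sq_nonneg ((n:ℝ))]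
      have h1 : (n:ℝ) ≤ 32 * Real.exp T * (n:ℝ)^2 := le_trans ha hb
      exact mul_le_mul_of_nonneg_right h1 (Real.exp_pos _).le
    by_cases hcase : (n:ℝ)*(K:ℝ) < sdev
    · have hz : μ {ω | sdev < |X ω|} = 0 := by
        have hempty : {ω | sdev < |X ω|} = (∅ : Set Ω) := by
          ext ω
          simp only [Set.mem_setOf_eq, Set.mem_empty_iff_false, iff_false, not_lt]
          exact le_trans (hXbd ω) hcase.le
        rw [hempty, measure_empty]
      rw [hz, zero_add] at hstep
      refine le_trans hstep (le_trans hBB (ENNReal.ofReal_le_ofReal ?_))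
      have h1 : (0:ℝ) ≤ 16*(n:ℝ)^2*Real.exp (-((n:ℝ)^((1:ℝ)-2*α)*η^2/32)) := by positivity
      linarith only [h1]
    · push_neg at hcase
      set l : ℝ := 2*sdev/(3*(n:ℝ)*(K:ℝ)^2) with hl_def
      clear_value l
      have hl0 : 0 ≤ l := by rw [hl_def]; positivity
      have hlK : l * K ≤ 1 := by
        rw [hl_def, div_mul_eq_mul_div, div_le_one (by positivity)]
        have hm1 := mul_le_mul_of_nonneg_right hcase hK0.le
        have hm2 : (0:ℝ) ≤ (n:ℝ)*(K:ℝ)^2 := by positivity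
        nlinarith only [hm1, hm2]
      have hexp_eq : -l*sdev + (n:ℝ)*(3/4*l^2*(K:ℝ)^2) = -(sdev^2/(3*(n:ℝ)*(K:ℝ)^2)) := by
        rw [hl_def]
        field_simp
        ring
      have hA2 : (n:ℝ)^((1:ℝ) - 2*α) * A^2 = (n:ℝ) := by
        rw [hA_def, sq, ← Real.rpow_add hn0, ← Real.rpow_add hn0,
          show (1:ℝ) - 2*α + (α + α) = 1 by ring, Real.rpow_one]
      have hP0 : 0 ≤ (n:ℝ)^((1:ℝ) - 2*α) := Real.rpow_nonneg hn0.le _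
      have hK2A2 : (K:ℝ)^2 ≤ 4*A^2 := by
        have h := pow_le_pow_left₀ hK0.le hK2A 2
        nlinarith only [h]
      have hsq : (255/256*((n:ℝ)*η))^2 ≤ sdev^2 := by
        apply pow_le_pow_left₀ (by positivity) hsdev_lb
      have hexp_le : (n:ℝ)^((1:ℝ)-2*α) * η^2/32 ≤ sdev^2/(3*(n:ℝ)*(K:ℝ)^2) := by
        rw [div_le_div_iff₀ (by norm_num) (by positivity)]
        have e1 : (n:ℝ)^((1:ℝ)-2*α) * η^2 * (3*(n:ℝ)*(K:ℝ)^2)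
            ≤ (n:ℝ)^((1:ℝ)-2*α) * η^2 * (3*(n:ℝ)*(4*A^2)) := by
          apply mul_le_mul_of_nonneg_left _ (by positivity)
          have := mul_le_mul_of_nonneg_left hK2A2 (by positivity : (0:ℝ) ≤ 3*(n:ℝ))
          linarith only [this]
        have e2 : (n:ℝ)^((1:ℝ)-2*α) * η^2 * (3*(n:ℝ)*(4*A^2))
            = 12*((n:ℝ)^((1:ℝ)-2*α) * A^2)*((n:ℝ)*η^2) := by ring
        rw [hA2] at e2
        nlinarith only [e1, e2, hsq]
      have hfin1 : μ {ω | sdev < |X ω|}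
          ≤ ENNReal.ofReal (2 * Real.exp (-((n:ℝ)^((1:ℝ)-2*α) * η^2/32))) := by
        refine le_trans (hcher sdev l hl0 hlK) (ENNReal.ofReal_le_ofReal ?_)
        have h2 : Real.exp (-l*sdev + (n:ℝ)*(3/4*l^2*(K:ℝ)^2))
            ≤ Real.exp (-((n:ℝ)^((1:ℝ)-2*α) * η^2/32)) := by
          apply Real.exp_le_exp.2
          rw [hexp_eq]
          linarith only [hexp_le]
        linarith only [h2]
      refine le_trans hstep (le_trans (add_le_add hfin1 hBB) ?_)
      rw [← ENNReal.ofReal_add (by positivity) (by positivity)]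
      apply ENNReal.ofReal_le_ofReal
      have h1 : 2 * Real.exp (-((n:ℝ)^((1:ℝ)-2*α)*η^2/32))
          ≤ 16*(n:ℝ)^2*Real.exp (-((n:ℝ)^((1:ℝ)-2*α)*η^2/32)) := by
        have hn4 : (4:ℝ) ≤ (n:ℝ)^2 := by nlinarith only [hn2, hn0]
        nlinarith only [Real.exp_pos (-((n:ℝ)^((1:ℝ)-2*α)*η^2/32)), hn4]
      linarith only [h1]
end
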